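/- arXiv:2303.03980 — 2 statements merged into one kernel-verified Lean document; each statement's English description precedes it below -/
import Mathlib

section
/- Let V be a rooted directed tree of finite length with root v0 and μ=(μ_v)_{v∈V} a weight of nonzero scalars. (a) Let 1<p<∞ with conjugate exponent p*, and suppose ∑_{u∈Chi(v)}|μ_u|^{-p*}<∞ for all v∈V. Then there exists a unique backward invariant sequence f on V with f(v0)=1 such that (∑_{v∈V}|f(v)μ_v|^p)^{1/p}=r_p(V,μ), equivalently such that (∑_{v∈V,v≠v0}|f(v)μ_v|^p)^{1/p}=c_p(V,μ); for any v=v_n∈gen_n, n≥1, it is given by f(v)=∏_{k=1}^n [r_p(V(v_k),μ)^{-p*} / ∑_{u∈Chi(par(v_k))} r_p(V(u),μ)^{-p*}] > 0, where (v0,v1,…,v_n) is the path from v0 to v_n. (b) Suppose ∑_{u∈Chi(v)}|μ_u|^{-1}<∞ for all v∈V. Then there exists a backward invariant sequence f on V with f(v0)=1 such that sup_{v∈V}|f(v)μ_v|=r_∞(V,μ) and sup_{v∈V,v≠v0}|f(v)μ_v|=c_∞(V,μ); one such f is given, for v=v_n∈gen_n, n≥1, by f(v)=∏_{k=1}^n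 [r_∞(V(v_k),μ)^{-1} / ∑_{u∈Chi(par(v_k))} r_∞(V(u),μ)^{-1}] > 0, where (v0,v1,…,v_n) is the path from v0 to v_n. -/
open scoped ENNReal NNReal Topology Classical
open Filter

namespace PaperTree

/-! ### Directed trees -/

variable {V : Type*}

/-- Iterated parent map of a directed tree given by a parent function. -/
def parIter (par : V → Option V) : ℕ → V → Option V
  | 0, v => some v
  | n + 1, v => (par v).bind (parIter par n)

/-- `par` is the parent function of a (countable, connected, acyclic) directed tree on `V`,
in which every vertex has at most one parent and at most one vertex (the root) has none. -/
structure IsDirectedTree (par : V → Option V) : Prop where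
  countable : Countable V
  acyclic : ∀ (v : V) (n : ℕ), 0 < n → parIter par n v ≠ some v
  connected : ∀ u v : V, ∃ (m n : ℕ) (w : V), parIter par m u = some w ∧ parIter par n v = some w
  root_unique : ∀ u v : V, par u = none → par v = none → u = v

/-- The set of children of `v`. -/
def children (par : V → Option V) (v : V) : Set V := {u : V | par u = some v}

/-- The set of descendants of `v` (including `v`); the rooted subtree `V(v)`. -/
def descendants (par : V → Option V) (v : V) : Set V := {u : V | ∃ n : ℕ, parIter par n u = some v}

def IsLeafV (par : V → Option V) (v : V) : Prop := children par v = ∅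

def Leafless (par : V → Option V) : Prop := ∀ v : V, children par v ≠ ∅

def IsRoot (par : V → Option V) (v : V) : Prop := par v = none

def Rooted (par : V → Option V) : Prop := ∃ v : V, IsRoot par v

def Unrooted (par : V → Option V) : Prop := ∀ v : V, par v ≠ none

/-- The tree has a free left end: some vertex all of whose (proper) ancestors
have exactly one child. -/
def HasFreeLeftEnd (par : V → Option V) : Prop :=
  ∃ v : V, ∀ n : ℕ, 1 ≤ n → ∀ w : V, parIter par n v = some w → ∃! u : V, u ∈ children par w

/-- The tree has finite length (all branches have uniformly bounded length). -/
def FiniteLength (par : V → Option V) : Prop := ∃ m : ℕ, ∀ u : V, parIter par (m + 1) u = none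

/-- Product of the weights along the upward path of length `n` ending at `u`;
for `u ∈ Chi^n(v)` this is `λ(v → u)`, and `pathProd par lam n v = λ(par^n(v) → v)`. -/
def pathProd {𝕜 : Type*} [Monoid 𝕜] (par : V → Option V) (lam : V → 𝕜) : ℕ → V → 𝕜
  | 0, _ => 1
  | n + 1, u => lam u * ((par u).elim 1 (pathProd par lam n))

/-- A (finite or infinite, maximal) branch starting at `v`, encoded with `Option`. -/
def IsOptBranch (par : V → Option V) (v : V) (b : ℕ → Option V) : Prop :=
  b 0 = some v ∧
  (∀ (k : ℕ) (w : V), b k = some w →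
      (children par w = ∅ ∧ b (k + 1) = none) ∨ ∃ u ∈ children par w, b (k + 1) = some u) ∧
  ∀ k : ℕ, b k = none → b (k + 1) = none

/-- An infinite branch starting at `v` (adequate for leafless trees). -/
def IsBranch (par : V → Option V) (v : V) (b : ℕ → V) : Prop :=
  b 0 = v ∧ ∀ k : ℕ, b (k + 1) ∈ children par (b k)

/-- The `[0,∞]`-valued absolute weight associated with a scalar weight. -/
noncomputable def nw {𝕜 : Type*} [RCLike 𝕜] (μ : V → 𝕜) : V → ℝ≥0∞ := fun v => (‖μ v‖₊ : ℝ≥0∞)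

/-! ### Fixed points over subtrees and backward invariant sequences -/

section Invariance

variable {𝕜 : Type*} [RCLike 𝕜] {V : Type*}

/-- The restriction of `g` to the subtree `W` is a fixed point of the weighted backward
shift over `W`: `g w = ∑_{u ∈ Chi(w) ∩ W} λ_u g u` (unconditionally) for every `w ∈ W`. -/
def FixedPtOver (par : V → Option V) (lam : V → 𝕜) (g : V → 𝕜) (W : Set V) : Prop :=
  ∀ w ∈ W, HasSum (fun u : ↥(children par w ∩ W) => lam u.1 * g u.1) (g w)

/-- `g` is backward invariant with respect to the children map `chi`:
`g v = ∑_{u ∈ chi v} g u` (unconditionally) for every non-leaf `v`. -/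
def BackwardInv (chi : V → Set V) (g : V → 𝕜) : Prop :=
  ∀ v : V, chi v ≠ ∅ → HasSum (fun u : ↥(chi v) => g u.1) (g v)

/-- Backward invariance over a subtree `W` (with respect to the children map `chi`). -/
def BackwardInvOn (chi : V → Set V) (W : Set V) (g : V → 𝕜) : Prop :=
  ∀ w ∈ W, (chi w ∩ W).Nonempty → HasSum (fun u : ↥(chi w ∩ W) => g u.1) (g w)

/-- A scalar that is a (strictly) positive real. -/
def IsPosScalar {𝕜 : Type*} [RCLike 𝕜] (c : 𝕜) : Prop := ∃ r : ℝ, 0 < r ∧ c = (r : 𝕜)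

end Invariance

/-! ### The generalized continued fractions `c_p` and resistances `r_p` -/

section Constants

/-- Conjugate exponent. -/
noncomputable def conjExp (p : ℝ) : ℝ := p / (p - 1)

variable {V : Type*}

/-- `cpAux chi w p m v` is the continued fraction `c_p` of the subtree of descendants of `v`
(with respect to the children map `chi`) truncated at depth `m`, with weight `w`. -/
noncomputable def cpAux (chi : V → Set V) (w : V → ℝ≥0∞) (p : ℝ) : ℕ → V → ℝ≥0∞
  | 0, _ => 0
  | m + 1, v =>
      if chi v = ∅ then 0
      else (∑' u : ↥(chi v),
              (w u.1 ^ p + cpAux chi w p m u.1 ^ p) ^ (-(conjExp p / p))) ^ (-(1 / conjExp p))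

/-- The continued fraction `c_p(V(v), w)` of order `1 < p < ∞`. -/
noncomputable def cpC (chi : V → Set V) (w : V → ℝ≥0∞) (p : ℝ) (v : V) : ℝ≥0∞ :=
  ⨆ m : ℕ, cpAux chi w p m v

/-- The resistance `r_p(V(v), w)` of order `1 < p < ∞`. -/
noncomputable def rpC (chi : V → Set V) (w : V → ℝ≥0∞) (p : ℝ) (v : V) : ℝ≥0∞ :=
  (w v ^ p + cpC chi w p v ^ p) ^ (1 / p)

/-- Truncated continued fraction of order `p = ∞`. -/
noncomputable def cInfAux (chi : V → Set V) (w : V → ℝ≥0∞) : ℕ → V → ℝ≥0∞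
  | 0, _ => 0
  | m + 1, v =>
      if chi v = ∅ then 0
      else (∑' u : ↥(chi v), (max (w u.1) (cInfAux chi w m u.1))⁻¹)⁻¹

/-- The continued fraction `c_∞(V(v), w)`. -/
noncomputable def cInfC (chi : V → Set V) (w : V → ℝ≥0∞) (v : V) : ℝ≥0∞ :=
  ⨆ m : ℕ, cInfAux chi w m v

/-- The resistance `r_∞(V(v), w)`. -/
noncomputable def rInfC (chi : V → Set V) (w : V → ℝ≥0∞) (v : V) : ℝ≥0∞ :=
  max (w v) (cInfC chi w v)

end Constants

/-! ### Weighted `ℓ^p`- and sup-norms on subsets of vertices -/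

section Norms

variable {𝕜 : Type*} [RCLike 𝕜] {V : Type*}

/-- `(∑_{v ∈ S} (|g v| w v)^p)^{1/p}` in `[0,∞]`. -/
noncomputable def lpSumOn (w : V → ℝ≥0∞) (p : ℝ) (S : Set V) (g : V → 𝕜) : ℝ≥0∞ :=
  (∑' v : ↥S, ((‖g v.1‖₊ : ℝ≥0∞) * w v.1) ^ p) ^ (1 / p)

/-- `sup_{v ∈ S} |g v| w v` in `[0,∞]`. -/
noncomputable def supNormOn (w : V → ℝ≥0∞) (S : Set V) (g : V → 𝕜) : ℝ≥0∞ :=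
  ⨆ v : ↥S, (‖g v.1‖₊ : ℝ≥0∞) * w v.1

end Norms

namespace Helpers
set_option linter.unusedSectionVars false
open scoped ENNReal NNReal

variable {V : Type*}

theorem tsum_insert_enn {a : V} {s : Set V} (h : a ∉ s) (F : V → ℝ≥0∞) :
    ∑' x : ↥(insert a s), F x.1 = F a + ∑' x : ↥s, F x.1 := by
  rw [Set.insert_eq]
  rw [ENNReal.summable.tsum_union_disjoint (f := F) (Set.disjoint_singleton_left.2 h)
    ENNReal.summable, tsum_singleton]

theorem tsum_iUnion_disj {ι : Type*} (t : ι → Set V) (hd : Pairwise (Function.onFun Disjoint t))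
    (F : V → ℝ≥0∞) :
    ∑' x : ↥(⋃ i, t i), F x.1 = ∑' i, ∑' x : ↥(t i), F x.1 := by
  calc ∑' x : ↥(⋃ i, t i), F x.1
      = ∑' p : Σ i, ↥(t i), F ((Set.unionEqSigmaOfDisjoint hd).symm p).1 :=
        ((Set.unionEqSigmaOfDisjoint hd).symm.tsum_eq
          (fun x : ↥(⋃ i, t i) => F x.1)).symm
    _ = ∑' p : Σ i, ↥(t i), F p.2.1 := tsum_congr fun p => rfl
    _ = ∑' i, ∑' x : ↥(t i), F x.1 := ENNReal.tsum_sigma' _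

theorem iSup_insert_set {a : V} (s : Set V) (F : V → ℝ≥0∞) :
    ⨆ x : ↥(insert a s), F x.1 = max (F a) (⨆ x : ↥s, F x.1) := by
  rw [iSup_subtype'', iSup_subtype'']
  exact iSup_insert

theorem iSup_iUnion_set {ι : Type*} (t : ι → Set V) (F : V → ℝ≥0∞) :
    ⨆ x : ↥(⋃ i, t i), F x.1 = ⨆ i, ⨆ x : ↥(t i), F x.1 := by
  rw [iSup_subtype'']
  rw [iSup_iUnion]
  exact iSup_congr fun i => by rw [iSup_subtype'']

theorem iSup_singleton_set (a : V) (F : V → ℝ≥0∞) :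
    ⨆ x : ↥({a} : Set V), F x.1 = F a := by
  rw [iSup_subtype'']
  exact iSup_singleton

theorem enorm_of_hasSum {ι : Type*} {𝕜 : Type*} [RCLike 𝕜] {g : ι → 𝕜} {s : 𝕜}
    (h : HasSum g s) : (‖s‖₊ : ℝ≥0∞) ≤ ∑' i, (‖g i‖₊ : ℝ≥0∞) := by
  by_cases htop : ∑' i, (‖g i‖₊ : ℝ≥0∞) = ⊤
  · exact htop ▸ le_top
  · have hsum : Summable fun i => ‖g i‖₊ := ENNReal.tsum_coe_ne_top_iff_summable.1 htop
    have hsumr : Summable fun i => ‖g i‖ := by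
      simpa [← NNReal.summable_coe] using hsum
    have h1 : ‖s‖ ≤ ∑' i, ‖g i‖ := by
      rw [← h.tsum_eq]
      exact norm_tsum_le_tsum_norm hsumr
    rw [← ENNReal.coe_tsum hsum]
    rw [ENNReal.coe_le_coe, ← NNReal.coe_le_coe]
    refine le_trans h1 (le_of_eq ?_)
    rw [NNReal.coe_tsum]
    rfl

theorem tsum_holder {ι : Type*} (f g : ι → ℝ≥0∞) {p q : ℝ} (hpq : Real.HolderConjugate p q) :
    ∑' i, f i * g i ≤ (∑' i, f i ^ p) ^ (1/p) * (∑' i, g i ^ q) ^ (1/q) := by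
  letI : MeasurableSpace ι := ⊤
  letI : MeasurableSingletonClass ι := ⟨fun _ => trivial⟩
  have := ENNReal.lintegral_mul_le_Lp_mul_Lq (MeasureTheory.Measure.count (α := ι)) hpq
    (measurable_from_top (f := f)).aemeasurable (measurable_from_top (f := g)).aemeasurable
  simpa [MeasureTheory.lintegral_count] using this

theorem rpow_half_strict {p : ℝ} (hp : 1 < p) {a b : ℝ} (ha : 0 ≤ a) (hb : 0 ≤ b)
    (h : ((a + b) / 2) ^ p = (a ^ p + b ^ p) / 2) : a = b := by
  by_contra hne
  have h2 := (strictConvexOn_rpow hp).2 (Set.mem_Ici.2 ha) (Set.mem_Ici.2 hb) hne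
    (by norm_num : (0:ℝ) < 1/2) (by norm_num : (0:ℝ) < 1/2) (by norm_num)
  simp only [smul_eq_mul] at h2
  rw [show (1/2 : ℝ) * a + 1/2 * b = (a + b)/2 by ring, h] at h2
  linarith

theorem eq_of_norm_add_eq {𝕜 : Type*} [RCLike 𝕜] {r : ℝ} (hr : 0 < r) {b : 𝕜}
    (hnb : ‖b‖ = r) (hadd : ‖(r : 𝕜) + b‖ = r + ‖b‖) : b = (r : 𝕜) := by
  have h1 : ‖(r : 𝕜) + b‖ ^ 2 = (r + RCLike.re b) * (r + RCLike.re b) +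
      RCLike.im b * RCLike.im b := by
    rw [RCLike.norm_sq_eq_def]
    simp [map_add]
  have h2 : ‖b‖ ^ 2 = RCLike.re b * RCLike.re b + RCLike.im b * RCLike.im b :=
    RCLike.norm_sq_eq_def
  rw [hnb] at h2 hadd
  rw [hadd] at h1
  have hre : RCLike.re b = r := by nlinarith
  have him : RCLike.im b = 0 := by nlinarith
  have := RCLike.re_add_im b
  rw [hre, him] at this
  simpa using this.symm

end Helpers

namespace TreeLemmas
set_option linter.unusedSectionVars false
variable {V : Type*}

/-! tree lemmas -/

theorem parIter_add (par : V → Option V) (a b : ℕ) (x : V) :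
    parIter par (a + b) x = (parIter par b x).bind (parIter par a) := by
  induction b generalizing x with
  | zero => rfl
  | succ b ih =>
      show parIter par (a + b + 1) x = _
      show (par x).bind (parIter par (a + b)) = ((par x).bind (parIter par b)).bind (parIter par a)
      cases par x with
      | none => rfl
      | some y => exact ih y

section Tree

variable (par : V → Option V) (root : V)

theorem parIter_root_pos (hroot : IsRoot par root) (n : ℕ) (hn : 0 < n) :
    parIter par n root = none := by
  cases n with
  | zero => omega
  | succ k => show (par root).bind _ = none; rw [hroot]; rfl

variable (hT : IsDirectedTree par) (hroot : IsRoot par root)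
include hT hroot

theorem exists_dpt (v : V) : ∃ n, parIter par n v = some root := by
  obtain ⟨a, b, w, hu, hv⟩ := hT.connected v root
  cases b with
  | zero =>
      cases hv
      exact ⟨a, hu⟩
  | succ k =>
      rw [parIter_root_pos par root hroot (k+1) (Nat.succ_pos k)] at hv
      exact absurd hv (by simp)

theorem dpt_unique {v : V} {a b : ℕ} (ha : parIter par a v = some root)
    (hb : parIter par b v = some root) : a = b := by
  wlog hab : a ≤ b generalizing a b
  · exact (this hb ha (le_of_not_ge hab)).symm
  rcases Nat.exists_eq_add_of_le hab with ⟨c, rfl⟩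
  have : parIter par (c + a) v = (parIter par a v).bind (parIter par c) := parIter_add par c a v
  rw [Nat.add_comm a c, this, ha] at hb
  cases c with
  | zero => rfl
  | succ k =>
      rw [show (some root).bind (parIter par (k+1)) = parIter par (k+1) root from rfl,
        parIter_root_pos par root hroot (k+1) (Nat.succ_pos k)] at hb
      exact absurd hb (by simp)

end Tree

section Dpt

variable (par : V → Option V) (root : V)

/-- Depth of a vertex. -/
noncomputable def dpt (v : V) : ℕ := sInf {n | parIter par n v = some root}

variable (hT : IsDirectedTree par) (hroot : IsRoot par root)
include hT hroot

theorem dpt_spec (v : V) : parIter par (dpt par root v) v = some root :=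
  Nat.sInf_mem (exists_dpt par root hT hroot v)

theorem dpt_eq {v : V} {n : ℕ} (h : parIter par n v = some root) : dpt par root v = n :=
  dpt_unique par root hT hroot (dpt_spec par root hT hroot v) h

theorem dpt_root : dpt par root root = 0 := dpt_eq par root hT hroot rfl

theorem eq_root_of_dpt_eq_zero {v : V} (h : dpt par root v = 0) : v = root := by
  have := dpt_spec par root hT hroot v
  rw [h] at this
  exact Option.some_injective _ this

theorem dpt_child {u v : V} (h : u ∈ children par v) :
    dpt par root u = dpt par root v + 1 := by
  refine dpt_eq par root hT hroot ?_
  show (par u).bind (parIter par (dpt par root v)) = some root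
  rw [h]
  exact dpt_spec par root hT hroot v

theorem dpt_desc {x y : V} (h : x ∈ descendants par y) :
    ∃ a, parIter par a x = some y ∧ dpt par root x = dpt par root y + a := by
  obtain ⟨a, ha⟩ := h
  refine ⟨a, ha, dpt_eq par root hT hroot ?_⟩
  rw [parIter_add par (dpt par root y) a x, ha]
  exact dpt_spec par root hT hroot y

theorem parent_of_ne_root {v : V} (h : v ≠ root) : ∃ x, par v = some x := by
  cases hv : par v with
  | none => exact absurd (hT.root_unique v root hv hroot) h
  | some x => exact ⟨x, rfl⟩

theorem mem_desc_root (v : V) : v ∈ descendants par root :=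
  ⟨dpt par root v, dpt_spec par root hT hroot v⟩

theorem desc_eq (v : V) :
    descendants par v = insert v (⋃ u : ↥(children par v), descendants par u.1) := by
  ext x
  constructor
  · rintro ⟨n, hn⟩
    cases n with
    | zero => exact Or.inl (Option.some_injective _ hn)
    | succ k =>
        right
        rw [show k + 1 = 1 + k from Nat.add_comm k 1, parIter_add par 1 k x] at hn
        cases hy : parIter par k x with
        | none => rw [hy] at hn; exact absurd hn (by simp)
        | some y =>
            rw [hy] at hn
            have hpar : par y = some v := by
              have : parIter par 1 y = some v := hn
              show par y = some v
              have h1 : parIter par 1 y = (par y).bind (parIter par 0) := rfl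
              rw [h1] at this
              cases hp : par y with
              | none => rw [hp] at this; exact absurd this (by simp)
              | some z => rw [hp] at this; exact this
            exact Set.mem_iUnion.2 ⟨⟨y, hpar⟩, ⟨k, hy⟩⟩
  · rintro (rfl | hx)
    · exact ⟨0, rfl⟩
    · obtain ⟨⟨u, hu⟩, ⟨a, ha⟩⟩ := Set.mem_iUnion.1 hx
      refine ⟨1 + a, ?_⟩
      rw [parIter_add par 1 a x, ha]
      show (par u).bind (parIter par 0) = some v
      rw [hu]
      rfl

theorem not_mem_iUnion_desc (v : V) :
    v ∉ ⋃ u : ↥(children par v), descendants par u.1 := by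
  intro hv
  obtain ⟨⟨u, hu⟩, hvu⟩ := Set.mem_iUnion.1 hv
  obtain ⟨a, -, hd⟩ := dpt_desc par root hT hroot hvu
  rw [dpt_child par root hT hroot hu] at hd
  omega

theorem disjoint_desc (v : V) :
    Pairwise (Function.onFun Disjoint fun u : ↥(children par v) => descendants par u.1) := by
  rintro ⟨u1, hu1⟩ ⟨u2, hu2⟩ hne
  rw [Function.onFun, Set.disjoint_left]
  rintro x hx1 hx2
  obtain ⟨a, ha, hda⟩ := dpt_desc par root hT hroot hx1
  obtain ⟨b, hb, hdb⟩ := dpt_desc par root hT hroot hx2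
  rw [dpt_child par root hT hroot hu1] at hda
  rw [dpt_child par root hT hroot hu2] at hdb
  have hab : a = b := by omega
  subst hab
  rw [ha] at hb
  exact hne (by simpa using Subtype.ext (Option.some_injective _ hb))

theorem desc_leaf {v : V} (h : children par v = ∅) : descendants par v = {v} := by
  rw [desc_eq par root hT hroot v, h]
  simp

theorem compl_root_eq :
    {x : V | x ≠ root} = ⋃ u : ↥(children par root), descendants par u.1 := by
  ext x
  simp only [Set.mem_setOf_eq]
  constructor
  · intro hx
    have := mem_desc_root par root hT hroot x
    rw [desc_eq par root hT hroot root] at this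
    rcases this with h | h
    · exact absurd h hx
    · exact h
  · intro hx hxr
    exact not_mem_iUnion_desc par root hT hroot root (hxr ▸ hx)

theorem univ_eq_desc_root : (Set.univ : Set V) = descendants par root :=
  (Set.eq_univ_of_forall (mem_desc_root par root hT hroot)).symm

end Dpt

section Fin

variable (par : V → Option V) (root : V) {m : ℕ}
variable (hT : IsDirectedTree par) (hroot : IsRoot par root)
    (hm : ∀ u : V, parIter par (m + 1) u = none)
include hT hroot hm

theorem dpt_le (v : V) : dpt par root v ≤ m := by
  by_contra h
  push_neg at h
  have hs := dpt_spec par root hT hroot v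
  obtain ⟨c, hc⟩ := Nat.exists_eq_add_of_le h
  rw [hc, show m + 1 + c = c + (m+1) from by omega, parIter_add par c (m+1) v, hm v] at hs
  exact absurd hs (by simp)

theorem leaf_of_dpt_eq {v : V} (h : m ≤ dpt par root v) : children par v = ∅ := by
  rw [Set.eq_empty_iff_forall_notMem]
  intro u hu
  have := dpt_child par root hT hroot hu
  have := dpt_le par root hT hroot hm u
  omega

end Fin


end TreeLemmas

section PartA
set_option linter.unusedSectionVars false
open scoped ENNReal NNReal

namespace Helpers

theorem rpow_neg_lt_top {x : ℝ≥0∞} {c : ℝ} (hc : 0 < c) (hx : x ≠ 0) : x ^ (-c) < ⊤ := by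
  rw [ENNReal.rpow_neg]
  refine ENNReal.inv_lt_top.2 ?_
  by_cases hxt : x = ⊤
  · simp [hxt, ENNReal.top_rpow_of_pos hc]
  · exact ENNReal.rpow_pos (pos_iff_ne_zero.2 hx) hxt

theorem rpow_neg_pos {x : ℝ≥0∞} {c : ℝ} (hc : 0 < c) (hx : x ≠ ⊤) : 0 < x ^ (-c) := by
  rw [ENNReal.rpow_neg, ENNReal.inv_pos]
  intro h
  rcases ENNReal.rpow_eq_top_iff.1 h with ⟨_, hneg⟩ | ⟨ht, _⟩
  · linarith
  · exact hx ht

theorem rpow_neg_antitone {x y : ℝ≥0∞} {c : ℝ} (hc : 0 ≤ c) (h : x ≤ y) :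
    y ^ (-c) ≤ x ^ (-c) := by
  rw [ENNReal.rpow_neg, ENNReal.rpow_neg]
  exact ENNReal.inv_le_inv.2 (ENNReal.rpow_le_rpow h hc)

end Helpers

open TreeLemmas Helpers

variable {V : Type*} (par : V → Option V) (root : V) {m : ℕ}
variable (w : V → ℝ≥0∞)

/-- The sum `∑_{u ∈ Chi(v)} r_p(V(u))^{-p*}`. -/
noncomputable def Tq (p : ℝ) (v : V) : ℝ≥0∞ :=
  ∑' u : ↥(children par v), rpC (children par) w p u.1 ^ (-(conjExp p))

variable {p : ℝ}
variable (hT : IsDirectedTree par) (hroot : IsRoot par root)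
  (hm : ∀ u : V, parIter par (m + 1) u = none)
  (hw0 : ∀ v : V, w v ≠ 0) (hwt : ∀ v : V, w v ≠ ⊤)
  (hp : 1 < p)
  (hsum : ∀ v : V, (∑' u : ↥(children par v), w u.1 ^ (-(conjExp p))) < ⊤)

theorem hpq' (hp : 1 < p) : Real.HolderConjugate p (conjExp p) :=
  Real.HolderConjugate.conjExponent hp

section Facts
include hT hroot hm hw0 hwt hp hsum

theorem cpAux_le_succ : ∀ (k : ℕ) (v : V),
    cpAux (children par) w p k v ≤ cpAux (children par) w p (k + 1) v := by
  have hp0 : (0:ℝ) < p := by linarith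
  have hq0 : (0:ℝ) < conjExp p := (hpq' hp).symm.pos
  intro k
  induction k with
  | zero => intro v; simp [cpAux]
  | succ k ih =>
      intro v
      show cpAux (children par) w p (k+1) v ≤ cpAux (children par) w p (k+2) v
      by_cases hv : children par v = ∅
      · simp [cpAux, hv]
      · rw [show cpAux (children par) w p (k+1) v
            = (∑' u : ↥(children par v),
                (w u.1 ^ p + cpAux (children par) w p k u.1 ^ p) ^ (-(conjExp p / p)))
              ^ (-(1 / conjExp p)) from by simp [cpAux, hv],
          show cpAux (children par) w p (k+2) v
            = (∑' u : ↥(children par v),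
                (w u.1 ^ p + cpAux (children par) w p (k+1) u.1 ^ p) ^ (-(conjExp p / p)))
              ^ (-(1 / conjExp p)) from by simp [cpAux, hv]]
        refine Helpers.rpow_neg_antitone (by positivity) ?_
        refine ENNReal.tsum_le_tsum fun u => ?_
        refine Helpers.rpow_neg_antitone (div_nonneg hq0.le hp0.le) ?_
        exact add_le_add_right (ENNReal.rpow_le_rpow (ih u.1) hp0.le) _

theorem cpAux_mono {k l : ℕ} (hkl : k ≤ l) (v : V) :
    cpAux (children par) w p k v ≤ cpAux (children par) w p l v := by
  induction l with
  | zero => simp_all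
  | succ l ih =>
      rcases Nat.lt_or_ge k (l+1) with h | h
      · exact le_trans (ih (by omega))
          (cpAux_le_succ par root w hT hroot hm hw0 hwt hp hsum l v)
      · have : k = l + 1 := by omega
        subst this; rfl

theorem cpAux_stab : ∀ (k : ℕ) (v : V), m ≤ dpt par root v + k →
    cpAux (children par) w p (k + 1) v = cpAux (children par) w p k v := by
  intro k
  induction k with
  | zero =>
      intro v hv
      have hleaf : children par v = ∅ := leaf_of_dpt_eq par root hT hroot hm (by omega)
      simp [cpAux, hleaf]
  | succ k ih =>
      intro v hv
      by_cases hleaf : children par v = ∅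
      · simp [cpAux, hleaf]
      · rw [show cpAux (children par) w p (k+2) v
            = (∑' u : ↥(children par v),
                (w u.1 ^ p + cpAux (children par) w p (k+1) u.1 ^ p) ^ (-(conjExp p / p)))
              ^ (-(1 / conjExp p)) from by simp [cpAux, hleaf],
          show cpAux (children par) w p (k+1) v
            = (∑' u : ↥(children par v),
                (w u.1 ^ p + cpAux (children par) w p k u.1 ^ p) ^ (-(conjExp p / p)))
              ^ (-(1 / conjExp p)) from by simp [cpAux, hleaf]]
        congr 1
        refine tsum_congr fun u => ?_
        rw [ih u.1 (by rw [dpt_child par root hT hroot u.2]; omega)]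

theorem cpC_eq_aux (v : V) :
    cpC (children par) w p v = cpAux (children par) w p m v := by
  refine le_antisymm (iSup_le fun k => ?_) (le_iSup (fun k => cpAux (children par) w p k v) m)
  rcases le_total k m with h | h
  · exact cpAux_mono par root w hT hroot hm hw0 hwt hp hsum h v
  · refine le_of_eq ?_
    induction k, h using Nat.le_induction with
    | base => rfl
    | succ k hk ihk =>
        rw [cpAux_stab par root w hT hroot hm hw0 hwt hp hsum k v (by omega), ihk]

theorem cpC_leaf {v : V} (hleaf : children par v = ∅) : cpC (children par) w p v = 0 := by
  refine le_antisymm (iSup_le fun k => ?_) zero_le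
  cases k with
  | zero => simp [cpAux]
  | succ k => simp [cpAux, hleaf]

theorem rpC_leaf {v : V} (hleaf : children par v = ∅) :
    rpC (children par) w p v = w v := by
  have hp0 : (0:ℝ) < p := by linarith
  rw [rpC, cpC_leaf par root w hT hroot hm hw0 hwt hp hsum hleaf,
    ENNReal.zero_rpow_of_pos hp0, add_zero,
    ← ENNReal.rpow_mul, mul_one_div, div_self hp0.ne', ENNReal.rpow_one]

theorem cpC_rec {v : V} (hv : children par v ≠ ∅) :
    cpC (children par) w p v = Tq par w p v ^ (-(1 / conjExp p)) := by
  have h1 : cpC (children par) w p v = cpAux (children par) w p (m + 1) v := by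
    rw [cpC_eq_aux par root w hT hroot hm hw0 hwt hp hsum v,
      cpAux_stab par root w hT hroot hm hw0 hwt hp hsum m v (by omega)]
  rw [h1, show cpAux (children par) w p (m+1) v
      = (∑' u : ↥(children par v),
          (w u.1 ^ p + cpAux (children par) w p m u.1 ^ p) ^ (-(conjExp p / p)))
        ^ (-(1 / conjExp p)) from by simp [cpAux, hv]]
  congr 1
  refine tsum_congr fun u => ?_
  rw [← cpC_eq_aux par root w hT hroot hm hw0 hwt hp hsum u.1, rpC, ← ENNReal.rpow_mul]
  congr 1
  ring

theorem cpC_lt_top : ∀ (k : ℕ) (v : V), m ≤ dpt par root v + k →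
    cpC (children par) w p v < ⊤ := by
  have hp0 : (0:ℝ) < p := by linarith
  have hq0 : (0:ℝ) < conjExp p := (hpq' hp).symm.pos
  intro k
  induction k with
  | zero =>
      intro v hv
      rw [cpC_leaf par root w hT hroot hm hw0 hwt hp hsum
        (leaf_of_dpt_eq par root hT hroot hm (by omega))]
      exact ENNReal.zero_lt_top
  | succ k ih =>
      intro v hv
      by_cases hleaf : children par v = ∅
      · rw [cpC_leaf par root w hT hroot hm hw0 hwt hp hsum hleaf]; exact ENNReal.zero_lt_top
      · rw [cpC_rec par root w hT hroot hm hw0 hwt hp hsum hleaf]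
        refine Helpers.rpow_neg_lt_top (by positivity) ?_
        obtain ⟨u0, hu0⟩ := Set.nonempty_iff_ne_empty.2 hleaf
        have hrf : rpC (children par) w p u0 ≠ ⊤ := by
          rw [rpC]
          refine (ENNReal.rpow_lt_top_of_nonneg (by positivity) ?_).ne
          refine ENNReal.add_ne_top.2 ⟨?_, ?_⟩
          · exact (ENNReal.rpow_lt_top_of_nonneg hp0.le (hwt u0)).ne
          · refine (ENNReal.rpow_lt_top_of_nonneg hp0.le ?_).ne
            exact (ih u0 (by rw [dpt_child par root hT hroot hu0]; omega)).ne
        have hpos : 0 < rpC (children par) w p u0 ^ (-(conjExp p)) :=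
          Helpers.rpow_neg_pos hq0 hrf
        refine ne_of_gt (lt_of_lt_of_le hpos ?_)
        exact ENNReal.le_tsum (⟨u0, hu0⟩ : ↥(children par v))

theorem cpC_lt_top' (v : V) : cpC (children par) w p v < ⊤ :=
  cpC_lt_top par root w hT hroot hm hw0 hwt hp hsum m v (by omega)

theorem rpC_lt_top (v : V) : rpC (children par) w p v < ⊤ := by
  have hp0 : (0:ℝ) < p := by linarith
  rw [rpC]
  refine ENNReal.rpow_lt_top_of_nonneg (by positivity) ?_
  refine ENNReal.add_ne_top.2 ⟨(ENNReal.rpow_lt_top_of_nonneg hp0.le (hwt v)).ne, ?_⟩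
  exact (ENNReal.rpow_lt_top_of_nonneg hp0.le
    (cpC_lt_top' par root w hT hroot hm hw0 hwt hp hsum v).ne).ne

theorem rpC_pos (v : V) : 0 < rpC (children par) w p v := by
  have hp0 : (0:ℝ) < p := by linarith
  rw [rpC]
  by_cases hc : w v ^ p + cpC (children par) w p v ^ p = ⊤
  · rw [hc, ENNReal.top_rpow_of_pos (by positivity : (0:ℝ) < 1/p)]
    exact ENNReal.zero_lt_top
  · refine ENNReal.rpow_pos ?_ hc
    calc (0 : ℝ≥0∞) < w v ^ p := ENNReal.rpow_pos (pos_iff_ne_zero.2 (hw0 v)) (hwt v)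
    _ ≤ _ := le_self_add

theorem rpC_ge_w (v : V) : w v ≤ rpC (children par) w p v := by
  have hp0 : (0:ℝ) < p := by linarith
  rw [rpC]
  calc w v = (w v ^ p) ^ (1/p) := by
        rw [← ENNReal.rpow_mul, mul_one_div, div_self hp0.ne', ENNReal.rpow_one]
  _ ≤ _ := ENNReal.rpow_le_rpow le_self_add (by positivity)

theorem Tq_lt_top (v : V) : Tq par w p v < ⊤ := by
  refine lt_of_le_of_lt (ENNReal.tsum_le_tsum fun u => ?_) (hsum v)
  exact Helpers.rpow_neg_antitone (le_of_lt (hpq' hp).symm.pos)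
    (rpC_ge_w par root w hT hroot hm hw0 hwt hp hsum u.1)

theorem Tq_pos {v : V} (hv : children par v ≠ ∅) : 0 < Tq par w p v := by
  have hq0 : (0:ℝ) < conjExp p := (hpq' hp).symm.pos
  obtain ⟨u0, hu0⟩ := Set.nonempty_iff_ne_empty.2 hv
  refine lt_of_lt_of_le (Helpers.rpow_neg_pos hq0
    (rpC_lt_top par root w hT hroot hm hw0 hwt hp hsum u0).ne) ?_
  exact ENNReal.le_tsum (⟨u0, hu0⟩ : ↥(children par v))

theorem cpC_pos {v : V} (hv : children par v ≠ ∅) : 0 < cpC (children par) w p v := by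
  have hq0 : (0:ℝ) < conjExp p := (hpq' hp).symm.pos
  rw [cpC_rec par root w hT hroot hm hw0 hwt hp hsum hv]
  exact Helpers.rpow_neg_pos (one_div_pos.2 hq0)
    (Tq_lt_top par root w hT hroot hm hw0 hwt hp hsum v).ne

theorem Tq_eq {v : V} (hv : children par v ≠ ∅) :
    Tq par w p v = cpC (children par) w p v ^ (-(conjExp p)) := by
  have hq0 : (0:ℝ) < conjExp p := (hpq' hp).symm.pos
  rw [cpC_rec par root w hT hroot hm hw0 hwt hp hsum hv, ← ENNReal.rpow_mul,
    show -(1 / conjExp p) * -(conjExp p) = 1 from by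
      rw [neg_mul_neg, one_div, inv_mul_cancel₀ hq0.ne'],
    ENNReal.rpow_one]

end Facts
end PartA

section PartA2
set_option linter.unusedSectionVars false
open scoped ENNReal NNReal
open TreeLemmas Helpers

variable {V : Type*} (par : V → Option V) (root : V) {m : ℕ}
variable (w : V → ℝ≥0∞)

/-- The canonical ratio `r_p(V(v))^{-p*} / ∑_{u ∈ Chi(par v)} r_p(V(u))^{-p*}`. -/
noncomputable def ratioP (p : ℝ) (v : V) : ℝ≥0∞ :=
  rpC (children par) w p v ^ (-(conjExp p)) / (par v).elim 1 (fun x => Tq par w p x)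

/-- The canonical backward invariant sequence. -/
noncomputable def fA (𝕜 : Type*) [RCLike 𝕜] (p : ℝ) : V → 𝕜 :=
  fun v => pathProd par (fun u => ((ratioP par w p u).toReal : 𝕜)) (dpt par root v) v

variable {𝕜 : Type*} [RCLike 𝕜] {p : ℝ}
variable (hT : IsDirectedTree par) (hroot : IsRoot par root)
  (hm : ∀ u : V, parIter par (m + 1) u = none)
  (hw0 : ∀ v : V, w v ≠ 0) (hwt : ∀ v : V, w v ≠ ⊤)
  (hp : 1 < p)
  (hsum : ∀ v : V, (∑' u : ↥(children par v), w u.1 ^ (-(conjExp p))) < ⊤)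

theorem ratioP_eq {v x : V} (hvx : par v = some x) :
    ratioP par w p v = rpC (children par) w p v ^ (-(conjExp p)) / Tq par w p x := by
  simp [ratioP, hvx]

section FactsB
include hT hroot hm hw0 hwt hp hsum

theorem ratioP_pos {v x : V} (hvx : par v = some x) : 0 < ratioP par w p v := by
  have hq0 : (0:ℝ) < conjExp p := (hpq' hp).symm.pos
  rw [ratioP_eq par w hvx]
  exact ENNReal.div_pos
    (Helpers.rpow_neg_pos hq0 (rpC_lt_top par root w hT hroot hm hw0 hwt hp hsum v).ne).ne'
    (Tq_lt_top par root w hT hroot hm hw0 hwt hp hsum x).ne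

theorem ratioP_lt_top {v x : V} (hvx : par v = some x) : ratioP par w p v < ⊤ := by
  have hq0 : (0:ℝ) < conjExp p := (hpq' hp).symm.pos
  rw [ratioP_eq par w hvx]
  refine ENNReal.div_lt_top
    (Helpers.rpow_neg_lt_top hq0 (rpC_pos par root w hT hroot hm hw0 hwt hp hsum v).ne').ne
    (Tq_pos par root w hT hroot hm hw0 hwt hp hsum
      (Set.nonempty_iff_ne_empty.1 ⟨v, hvx⟩)).ne'

theorem fA_root : fA par root w 𝕜 p root = 1 := by
  show pathProd _ _ (dpt par root root) root = 1
  rw [dpt_root par root hT hroot]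
  rfl

theorem fA_step {v x : V} (hvx : par v = some x) :
    fA par root w 𝕜 p v = ((ratioP par w p v).toReal : 𝕜) * fA par root w 𝕜 p x := by
  have hdv : dpt par root v = dpt par root x + 1 := dpt_child par root hT hroot hvx
  show pathProd _ _ (dpt par root v) v = _
  rw [hdv]
  show (fun u => ((ratioP par w p u).toReal : 𝕜)) v *
      ((par v).elim 1 (pathProd par _ (dpt par root x))) = _
  rw [hvx]
  rfl

theorem fA_pos : ∀ (n : ℕ) (v : V), dpt par root v = n →
    ∃ r : ℝ, 0 < r ∧ fA par root w 𝕜 p v = (r : 𝕜) := by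
  intro n
  induction n with
  | zero =>
      intro v hv
      rw [eq_root_of_dpt_eq_zero par root hT hroot hv]
      exact ⟨1, one_pos, by rw [fA_root par root w hT hroot hm hw0 hwt hp hsum]; simp⟩
  | succ n ih =>
      intro v hv
      have hvr : v ≠ root := by
        intro h; rw [h, dpt_root par root hT hroot] at hv; omega
      obtain ⟨x, hvx⟩ := parent_of_ne_root par root hT hroot hvr
      have hdx : dpt par root x = n := by
        have := dpt_child par root hT hroot hvx; omega
      obtain ⟨r, hr, hfx⟩ := ih x hdx
      refine ⟨(ratioP par w p v).toReal * r, ?_, ?_⟩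
      · exact mul_pos (ENNReal.toReal_pos
          (ratioP_pos par root w hT hroot hm hw0 hwt hp hsum hvx).ne'
          (ratioP_lt_top par root w hT hroot hm hw0 hwt hp hsum hvx).ne) hr
      · rw [fA_step par root w hT hroot hm hw0 hwt hp hsum hvx, hfx]
        push_cast
        ring

theorem fA_pos' (v : V) : ∃ r : ℝ, 0 < r ∧ fA par root w 𝕜 p v = (r : 𝕜) :=
  fA_pos par root w hT hroot hm hw0 hwt hp hsum (dpt par root v) v rfl

theorem fA_ne_zero (v : V) : fA par root w 𝕜 p v ≠ 0 := by
  obtain ⟨r, hr, hf⟩ := fA_pos' par root w (𝕜 := 𝕜) hT hroot hm hw0 hwt hp hsum v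
  rw [hf]
  exact_mod_cast hr.ne'

theorem enorm_fA_step {v x : V} (hvx : par v = some x) :
    (‖fA par root w 𝕜 p v‖₊ : ℝ≥0∞) = ratioP par w p v * (‖fA par root w 𝕜 p x‖₊ : ℝ≥0∞) := by
  rw [fA_step par root w hT hroot hm hw0 hwt hp hsum hvx, nnnorm_mul, ENNReal.coe_mul]
  congr 1
  rw [show ‖(((ratioP par w p v).toReal : ℝ) : 𝕜)‖₊ = ‖(ratioP par w p v).toReal‖₊ from
      by simp,
    ← enorm_eq_nnnorm, Real.enorm_eq_ofReal ENNReal.toReal_nonneg,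
    ENNReal.ofReal_toReal (ratioP_lt_top par root w hT hroot hm hw0 hwt hp hsum hvx).ne]

theorem tsum_ratio_enn {v : V} (hv : children par v ≠ ∅) :
    ∑' u : ↥(children par v),
      rpC (children par) w p u.1 ^ (-(conjExp p)) / Tq par w p v = 1 := by
  have h1 : ∀ u : ↥(children par v),
      rpC (children par) w p u.1 ^ (-(conjExp p)) / Tq par w p v
        = rpC (children par) w p u.1 ^ (-(conjExp p)) * (Tq par w p v)⁻¹ :=
    fun u => by rw [div_eq_mul_inv]
  rw [tsum_congr h1, ENNReal.tsum_mul_right]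
  rw [show ∑' u : ↥(children par v), rpC (children par) w p u.1 ^ (-(conjExp p))
      = Tq par w p v from rfl]
  exact ENNReal.mul_inv_cancel
    (Tq_pos par root w hT hroot hm hw0 hwt hp hsum hv).ne'
    (Tq_lt_top par root w hT hroot hm hw0 hwt hp hsum v).ne

theorem tsum_ratioP {v : V} (hv : children par v ≠ ∅) :
    ∑' u : ↥(children par v), ratioP par w p u.1 = 1 := by
  rw [tsum_congr (fun u : ↥(children par v) => ratioP_eq par w u.2)]
  exact tsum_ratio_enn par root w hT hroot hm hw0 hwt hp hsum hv

theorem hasSum_ratio {v : V} (hv : children par v ≠ ∅) :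
    HasSum (fun u : ↥(children par v) => ((ratioP par w p u.1).toReal : 𝕜)) 1 := by
  have hne : ∀ u : ↥(children par v), ratioP par w p u.1 ≠ ⊤ :=
    fun u => (ratioP_lt_top par root w hT hroot hm hw0 hwt hp hsum u.2).ne
  have h0 : ∑' u : ↥(children par v), ratioP par w p u.1 ≠ ⊤ := by
    rw [tsum_ratioP par root w hT hroot hm hw0 hwt hp hsum hv]
    exact ENNReal.one_ne_top
  have h1 : Summable (fun u : ↥(children par v) => (ratioP par w p u.1).toReal) :=
    ENNReal.summable_toReal h0
  have h2 : ∑' u : ↥(children par v), (ratioP par w p u.1).toReal = 1 := by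
    rw [← ENNReal.tsum_toReal_eq hne, tsum_ratioP par root w hT hroot hm hw0 hwt hp hsum hv]
    simp
  have h3 := h1.hasSum
  rw [h2] at h3
  have h4 := h3.map (algebraMap ℝ 𝕜) (by
    rw [RCLike.algebraMap_eq_ofReal]; exact RCLike.continuous_ofReal)
  simpa [RCLike.algebraMap_eq_ofReal, Function.comp_def] using h4

theorem backwardInv_fA : BackwardInv (children par) (fA par root w 𝕜 p) := by
  intro v hv
  have h := (hasSum_ratio par root w (𝕜 := 𝕜) hT hroot hm hw0 hwt hp hsum hv).mul_right
    (fA par root w 𝕜 p v)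
  rw [one_mul] at h
  have he : (fun u : ↥(children par v) =>
      ((ratioP par w p u.1).toReal : 𝕜) * fA par root w 𝕜 p v)
      = fun u : ↥(children par v) => fA par root w 𝕜 p u.1 :=
    funext fun u => (fA_step par root w hT hroot hm hw0 hwt hp hsum u.2).symm
  rwa [he] at h

end FactsB
end PartA2

section PartA3
set_option linter.unusedSectionVars false
open scoped ENNReal NNReal
open TreeLemmas Helpers

variable {V : Type*} (par : V → Option V) (root : V) {m : ℕ}
variable (w : V → ℝ≥0∞)
variable {𝕜 : Type*} [RCLike 𝕜] {p : ℝ}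
variable (hT : IsDirectedTree par) (hroot : IsRoot par root)
  (hm : ∀ u : V, parIter par (m + 1) u = none)
  (hw0 : ∀ v : V, w v ≠ 0) (hwt : ∀ v : V, w v ≠ ⊤)
  (hp : 1 < p)
  (hsum : ∀ v : V, (∑' u : ↥(children par v), w u.1 ^ (-(conjExp p))) < ⊤)

private theorem key_term (hp : 1 < p) {a t c : ℝ≥0∞} (ha0 : a ≠ 0) (haT : a ≠ ⊤)
    (ht0 : t ≠ 0) (htT : t ≠ ⊤) :
    ((a ^ (-(conjExp p)) / t * c) * a) ^ p
      = (c ^ p * (t ^ (-(1 / conjExp p))) ^ p) * (a ^ (-(conjExp p)) / t) := by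
  have hp0 : (0:ℝ) < p := by linarith
  have hpm1 : p - 1 ≠ 0 := by linarith
  have hq : conjExp p = p / (p - 1) := rfl
  have h1 : a ^ (-(conjExp p)) / t * c * a = (a ^ (-(conjExp p)) * a) * t⁻¹ * c := by
    rw [div_eq_mul_inv]; ring
  have h2 : a ^ (-(conjExp p)) * a = a ^ (-(conjExp p) + 1) := by
    rw [ENNReal.rpow_add _ _ ha0 haT, ENNReal.rpow_one]
  rw [h1, h2, ENNReal.mul_rpow_of_nonneg _ _ hp0.le, ENNReal.mul_rpow_of_nonneg _ _ hp0.le,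
    ← ENNReal.rpow_mul a, ← ENNReal.rpow_mul t, ENNReal.inv_rpow, ← ENNReal.rpow_neg]
  have h3 : a ^ ((-(conjExp p) + 1) * p) = a ^ (-(conjExp p)) := by
    congr 1
    rw [hq]
    field_simp
    ring
  have h4 : t ^ (-p) = t ^ (-(1 / conjExp p) * p) * t⁻¹ := by
    rw [← ENNReal.rpow_neg_one t, ← ENNReal.rpow_add _ _ ht0 htT]
    congr 1
    rw [hq]
    field_simp
    ring
  rw [h3, h4, ENNReal.div_eq_inv_mul]
  ring

section FactsC
include hT hroot hm hw0 hwt hp hsum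

theorem rpC_pow (v : V) :
    rpC (children par) w p v ^ p = w v ^ p + cpC (children par) w p v ^ p := by
  have hp0 : (0:ℝ) < p := by linarith
  rw [rpC, ← ENNReal.rpow_mul, one_div, inv_mul_cancel₀ hp0.ne', ENNReal.rpow_one]

theorem term_eq {v u : V} (hu : par u = some v) :
    ((‖fA par root w 𝕜 p u‖₊ : ℝ≥0∞) * rpC (children par) w p u) ^ p
      = ((‖fA par root w 𝕜 p v‖₊ : ℝ≥0∞) ^ p * cpC (children par) w p v ^ p)
        * (rpC (children par) w p u ^ (-(conjExp p)) / Tq par w p v) := by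
  have hv : children par v ≠ ∅ := Set.nonempty_iff_ne_empty.1 ⟨u, hu⟩
  rw [enorm_fA_step par root w hT hroot hm hw0 hwt hp hsum hu, ratioP_eq par w hu,
    cpC_rec par root w hT hroot hm hw0 hwt hp hsum hv]
  exact key_term hp
    (rpC_pos par root w hT hroot hm hw0 hwt hp hsum u).ne'
    (rpC_lt_top par root w hT hroot hm hw0 hwt hp hsum u).ne
    (Tq_pos par root w hT hroot hm hw0 hwt hp hsum hv).ne'
    (Tq_lt_top par root w hT hroot hm hw0 hwt hp hsum v).ne

theorem sum_children_fA {v : V} (hv : children par v ≠ ∅)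
    (hIH : ∀ u : ↥(children par v),
      (∑' x : ↥(descendants par u.1), ((‖fA par root w 𝕜 p x.1‖₊ : ℝ≥0∞) * w x.1) ^ p)
        = ((‖fA par root w 𝕜 p u.1‖₊ : ℝ≥0∞) * rpC (children par) w p u.1) ^ p) :
    ∑' u : ↥(children par v),
        ∑' x : ↥(descendants par u.1), ((‖fA par root w 𝕜 p x.1‖₊ : ℝ≥0∞) * w x.1) ^ p
      = (‖fA par root w 𝕜 p v‖₊ : ℝ≥0∞) ^ p * cpC (children par) w p v ^ p := by
  rw [tsum_congr hIH,
    tsum_congr (fun u : ↥(children par v) =>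
      term_eq par root w hT hroot hm hw0 hwt hp hsum u.2),
    ENNReal.tsum_mul_left, tsum_ratio_enn par root w hT hroot hm hw0 hwt hp hsum hv, mul_one]

theorem sum_desc_leaf {v : V} (hleaf : children par v = ∅) :
    ∑' x : ↥(descendants par v), ((‖fA par root w 𝕜 p x.1‖₊ : ℝ≥0∞) * w x.1) ^ p
      = ((‖fA par root w 𝕜 p v‖₊ : ℝ≥0∞) * rpC (children par) w p v) ^ p := by
  rw [desc_leaf par root hT hroot hleaf,
    rpC_leaf par root w hT hroot hm hw0 hwt hp hsum hleaf]
  exact tsum_singleton v (fun x => ((‖fA par root w 𝕜 p x‖₊ : ℝ≥0∞) * w x) ^ p)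

theorem sum_desc_fA : ∀ (k : ℕ) (v : V), m ≤ dpt par root v + k →
    ∑' x : ↥(descendants par v), ((‖fA par root w 𝕜 p x.1‖₊ : ℝ≥0∞) * w x.1) ^ p
      = ((‖fA par root w 𝕜 p v‖₊ : ℝ≥0∞) * rpC (children par) w p v) ^ p := by
  have hp0 : (0:ℝ) < p := by linarith
  intro k
  induction k with
  | zero =>
      intro v hv
      exact sum_desc_leaf par root w hT hroot hm hw0 hwt hp hsum
        (leaf_of_dpt_eq par root hT hroot hm (by omega))
  | succ k ih =>
      intro v hv
      by_cases hleaf : children par v = ∅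
      · exact sum_desc_leaf par root w hT hroot hm hw0 hwt hp hsum hleaf
      · rw [desc_eq par root hT hroot v,
          Helpers.tsum_insert_enn (not_mem_iUnion_desc par root hT hroot v) (fun y => ((‖fA par root w 𝕜 p y‖₊ : ℝ≥0∞) * w y) ^ p),
          Helpers.tsum_iUnion_disj _ (disjoint_desc par root hT hroot v) (fun y => ((‖fA par root w 𝕜 p y‖₊ : ℝ≥0∞) * w y) ^ p),
          sum_children_fA par root w hT hroot hm hw0 hwt hp hsum hleaf
            (fun u => ih u.1 (by rw [dpt_child par root hT hroot u.2]; omega)),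
          ENNReal.mul_rpow_of_nonneg _ _ hp0.le, ENNReal.mul_rpow_of_nonneg _ _ hp0.le,
          rpC_pow par root w hT hroot hm hw0 hwt hp hsum v, mul_add]

theorem lpSum_univ_fA :
    lpSumOn w p Set.univ (fA par root w 𝕜 p) = rpC (children par) w p root := by
  have hp0 : (0:ℝ) < p := by linarith
  unfold lpSumOn
  rw [show (Set.univ : Set V) = descendants par root from univ_eq_desc_root par root hT hroot,
    sum_desc_fA par root w hT hroot hm hw0 hwt hp hsum m root (by omega),
    fA_root par root w hT hroot hm hw0 hwt hp hsum]
  simp only [nnnorm_one, ENNReal.coe_one, one_mul]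
  rw [← ENNReal.rpow_mul, mul_one_div, div_self hp0.ne', ENNReal.rpow_one]

theorem lpSum_ne_root_fA :
    lpSumOn w p {v : V | v ≠ root} (fA par root w 𝕜 p) = cpC (children par) w p root := by
  have hp0 : (0:ℝ) < p := by linarith
  unfold lpSumOn
  rw [show {v : V | v ≠ root} = ⋃ u : ↥(children par root), descendants par u.1 from
      compl_root_eq par root hT hroot,
    Helpers.tsum_iUnion_disj _ (disjoint_desc par root hT hroot root) (fun y => ((‖fA par root w 𝕜 p y‖₊ : ℝ≥0∞) * w y) ^ p)]
  by_cases hleaf : children par root = ∅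
  · have : IsEmpty ↥(children par root) := by rw [hleaf]; exact Set.isEmpty_coe_sort.2 rfl
    rw [tsum_empty, cpC_leaf par root w hT hroot hm hw0 hwt hp hsum hleaf]
    exact ENNReal.zero_rpow_of_pos (by positivity)
  · rw [sum_children_fA par root w hT hroot hm hw0 hwt hp hsum hleaf
      (fun u => sum_desc_fA par root w hT hroot hm hw0 hwt hp hsum m u.1 (by omega)),
      fA_root par root w hT hroot hm hw0 hwt hp hsum]
    simp only [nnnorm_one, ENNReal.coe_one, ENNReal.one_rpow, one_mul]
    rw [← ENNReal.rpow_mul, mul_one_div, div_self hp0.ne', ENNReal.rpow_one]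

theorem holder_children (g : V → 𝕜) {v : V} (hv : children par v ≠ ∅)
    (hs : HasSum (fun u : ↥(children par v) => g u.1) (g v)) :
    (‖g v‖₊ : ℝ≥0∞) ^ p * cpC (children par) w p v ^ p
      ≤ ∑' u : ↥(children par v), ((‖g u.1‖₊ : ℝ≥0∞) * rpC (children par) w p u.1) ^ p := by
  have hp0 : (0:ℝ) < p := by linarith
  have hq0 : (0:ℝ) < conjExp p := (hpq' hp).symm.pos
  have ht0 : Tq par w p v ≠ 0 := (Tq_pos par root w hT hroot hm hw0 hwt hp hsum hv).ne'
  have htT : Tq par w p v ≠ ⊤ := (Tq_lt_top par root w hT hroot hm hw0 hwt hp hsum v).ne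
  set S := ∑' u : ↥(children par v), ((‖g u.1‖₊ : ℝ≥0∞) * rpC (children par) w p u.1) ^ p
    with hS
  have h6 : (‖g v‖₊ : ℝ≥0∞) ≤ S ^ (1/p) * Tq par w p v ^ (1/conjExp p) := by
    calc (‖g v‖₊ : ℝ≥0∞) ≤ ∑' u : ↥(children par v), (‖g u.1‖₊ : ℝ≥0∞) :=
          Helpers.enorm_of_hasSum hs
    _ = ∑' u : ↥(children par v),
          ((‖g u.1‖₊ : ℝ≥0∞) * rpC (children par) w p u.1)
          * (rpC (children par) w p u.1)⁻¹ := by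
        refine tsum_congr fun u => ?_
        rw [mul_assoc, ENNReal.mul_inv_cancel
          (rpC_pos par root w hT hroot hm hw0 hwt hp hsum u.1).ne'
          (rpC_lt_top par root w hT hroot hm hw0 hwt hp hsum u.1).ne, mul_one]
    _ ≤ S ^ (1/p) * (∑' u : ↥(children par v),
          ((rpC (children par) w p u.1)⁻¹) ^ (conjExp p)) ^ (1/conjExp p) :=
        Helpers.tsum_holder _ _ (hpq' hp)
    _ = S ^ (1/p) * Tq par w p v ^ (1/conjExp p) := by
        congr 2
        refine tsum_congr fun u => ?_
        rw [ENNReal.inv_rpow, ← ENNReal.rpow_neg]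
  have h7 : (‖g v‖₊ : ℝ≥0∞) * cpC (children par) w p v ≤ S ^ (1/p) := by
    rw [cpC_rec par root w hT hroot hm hw0 hwt hp hsum hv]
    calc (‖g v‖₊ : ℝ≥0∞) * Tq par w p v ^ (-(1/conjExp p))
        ≤ (S ^ (1/p) * Tq par w p v ^ (1/conjExp p)) * Tq par w p v ^ (-(1/conjExp p)) :=
          mul_le_mul_left h6 _
    _ = S ^ (1/p) := by
        rw [mul_assoc, ← ENNReal.rpow_add _ _ ht0 htT, add_neg_cancel, ENNReal.rpow_zero,
          mul_one]
  have h8 := ENNReal.rpow_le_rpow h7 hp0.le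
  rw [ENNReal.mul_rpow_of_nonneg _ _ hp0.le, ← ENNReal.rpow_mul S, one_div,
    inv_mul_cancel₀ hp0.ne', ENNReal.rpow_one] at h8
  exact h8

set_option maxHeartbeats 1000000 in
theorem sum_ge_g (g : V → 𝕜) (hg : BackwardInv (children par) g) :
    ∀ (k : ℕ) (v : V), m ≤ dpt par root v + k →
    ((‖g v‖₊ : ℝ≥0∞) * rpC (children par) w p v) ^ p
      ≤ ∑' x : ↥(descendants par v), ((‖g x.1‖₊ : ℝ≥0∞) * w x.1) ^ p := by
  have hp0 : (0:ℝ) < p := by linarith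
  have hleafcase : ∀ v : V, children par v = ∅ →
      ((‖g v‖₊ : ℝ≥0∞) * rpC (children par) w p v) ^ p
        ≤ ∑' x : ↥(descendants par v), ((‖g x.1‖₊ : ℝ≥0∞) * w x.1) ^ p := by
    intro v hleaf
    rw [desc_leaf par root hT hroot hleaf,
      rpC_leaf par root w hT hroot hm hw0 hwt hp hsum hleaf,
      tsum_singleton v (fun x => ((‖g x‖₊ : ℝ≥0∞) * w x) ^ p)]
  intro k
  induction k with
  | zero =>
      intro v hv
      exact hleafcase v (leaf_of_dpt_eq par root hT hroot hm (by omega))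
  | succ k ih =>
      intro v hv
      by_cases hleaf : children par v = ∅
      · exact hleafcase v hleaf
      · have hstep : ∑' u : ↥(children par v),
            ((‖g u.1‖₊ : ℝ≥0∞) * rpC (children par) w p u.1) ^ p
            ≤ ∑' u : ↥(children par v),
                ∑' x : ↥(descendants par u.1), ((‖g x.1‖₊ : ℝ≥0∞) * w x.1) ^ p :=
          ENNReal.tsum_le_tsum fun u =>
            ih u.1 (by rw [dpt_child par root hT hroot u.2]; omega)
        rw [desc_eq par root hT hroot v,
          Helpers.tsum_insert_enn (not_mem_iUnion_desc par root hT hroot v) (fun y => ((‖g y‖₊ : ℝ≥0∞) * w y) ^ p),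
          Helpers.tsum_iUnion_disj _ (disjoint_desc par root hT hroot v) (fun y => ((‖g y‖₊ : ℝ≥0∞) * w y) ^ p)]
        calc ((‖g v‖₊ : ℝ≥0∞) * rpC (children par) w p v) ^ p
            = ((‖g v‖₊ : ℝ≥0∞) * w v) ^ p
              + (‖g v‖₊ : ℝ≥0∞) ^ p * cpC (children par) w p v ^ p := by
              rw [ENNReal.mul_rpow_of_nonneg _ _ hp0.le,
                ENNReal.mul_rpow_of_nonneg _ _ hp0.le,
                rpC_pow par root w hT hroot hm hw0 hwt hp hsum v, mul_add]
        _ ≤ ((‖g v‖₊ : ℝ≥0∞) * w v) ^ p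
              + ∑' u : ↥(children par v),
                  ((‖g u.1‖₊ : ℝ≥0∞) * rpC (children par) w p u.1) ^ p :=
            add_le_add_right (holder_children par root w hT hroot hm hw0 hwt hp hsum g hleaf
              (hg v hleaf)) _
        _ ≤ ((‖g v‖₊ : ℝ≥0∞) * w v) ^ p
              + ∑' u : ↥(children par v),
                  ∑' x : ↥(descendants par u.1), ((‖g x.1‖₊ : ℝ≥0∞) * w x.1) ^ p :=
            add_le_add_right hstep _

end FactsC
end PartA3

section PartB
set_option linter.unusedSectionVars false
open scoped ENNReal NNReal
open TreeLemmas Helpers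

variable {V : Type*} (par : V → Option V) (root : V) {m : ℕ}
variable (w : V → ℝ≥0∞)

/-- The sum `∑_{u ∈ Chi(v)} r_∞(V(u))⁻¹`. -/
noncomputable def TInf (v : V) : ℝ≥0∞ :=
  ∑' u : ↥(children par v), (rInfC (children par) w u.1)⁻¹

/-- The canonical ratio for `p = ∞`. -/
noncomputable def ratioI (v : V) : ℝ≥0∞ :=
  (rInfC (children par) w v)⁻¹ / (par v).elim 1 (fun x => TInf par w x)

/-- The canonical backward invariant sequence for `p = ∞`. -/
noncomputable def fI (𝕜 : Type*) [RCLike 𝕜] : V → 𝕜 :=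
  fun v => pathProd par (fun u => ((ratioI par w u).toReal : 𝕜)) (dpt par root v) v

variable {𝕜 : Type*} [RCLike 𝕜]
variable (hT : IsDirectedTree par) (hroot : IsRoot par root)
  (hm : ∀ u : V, parIter par (m + 1) u = none)
  (hw0 : ∀ v : V, w v ≠ 0) (hwt : ∀ v : V, w v ≠ ⊤)
  (hsumI : ∀ v : V, (∑' u : ↥(children par v), (w u.1)⁻¹) < ⊤)

theorem ratioI_eq {v x : V} (hvx : par v = some x) :
    ratioI par w v = (rInfC (children par) w v)⁻¹ / TInf par w x := by
  simp [ratioI, hvx]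

section FactsI
include hT hroot hm hw0 hwt hsumI

theorem cInfAux_le_succ : ∀ (k : ℕ) (v : V),
    cInfAux (children par) w k v ≤ cInfAux (children par) w (k + 1) v := by
  intro k
  induction k with
  | zero => intro v; simp [cInfAux]
  | succ k ih =>
      intro v
      by_cases hv : children par v = ∅
      · simp [cInfAux, hv]
      · rw [show cInfAux (children par) w (k+1) v
            = (∑' u : ↥(children par v), (max (w u.1) (cInfAux (children par) w k u.1))⁻¹)⁻¹
            from by simp [cInfAux, hv],
          show cInfAux (children par) w (k+2) v
            = (∑' u : ↥(children par v), (max (w u.1) (cInfAux (children par) w (k+1) u.1))⁻¹)⁻¹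
            from by simp [cInfAux, hv]]
        refine ENNReal.inv_le_inv.2 (ENNReal.tsum_le_tsum fun u => ?_)
        exact ENNReal.inv_le_inv.2 (max_le_max le_rfl (ih u.1))

theorem cInfAux_mono {k l : ℕ} (hkl : k ≤ l) (v : V) :
    cInfAux (children par) w k v ≤ cInfAux (children par) w l v := by
  induction l with
  | zero => simp_all
  | succ l ih =>
      rcases Nat.lt_or_ge k (l+1) with h | h
      · exact le_trans (ih (by omega))
          (cInfAux_le_succ par root w hT hroot hm hw0 hwt hsumI l v)
      · have : k = l + 1 := by omega
        subst this; rfl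

theorem cInfAux_stab : ∀ (k : ℕ) (v : V), m ≤ dpt par root v + k →
    cInfAux (children par) w (k + 1) v = cInfAux (children par) w k v := by
  intro k
  induction k with
  | zero =>
      intro v hv
      have hleaf : children par v = ∅ := leaf_of_dpt_eq par root hT hroot hm (by omega)
      simp [cInfAux, hleaf]
  | succ k ih =>
      intro v hv
      by_cases hleaf : children par v = ∅
      · simp [cInfAux, hleaf]
      · rw [show cInfAux (children par) w (k+2) v
            = (∑' u : ↥(children par v), (max (w u.1) (cInfAux (children par) w (k+1) u.1))⁻¹)⁻¹
            from by simp [cInfAux, hleaf],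
          show cInfAux (children par) w (k+1) v
            = (∑' u : ↥(children par v), (max (w u.1) (cInfAux (children par) w k u.1))⁻¹)⁻¹
            from by simp [cInfAux, hleaf]]
        congr 1
        refine tsum_congr fun u => ?_
        rw [ih u.1 (by rw [dpt_child par root hT hroot u.2]; omega)]

theorem cInfC_eq_aux (v : V) :
    cInfC (children par) w v = cInfAux (children par) w m v := by
  refine le_antisymm (iSup_le fun k => ?_) (le_iSup (fun k => cInfAux (children par) w k v) m)
  rcases le_total k m with h | h
  · exact cInfAux_mono par root w hT hroot hm hw0 hwt hsumI h v
  · refine le_of_eq ?_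
    induction k, h using Nat.le_induction with
    | base => rfl
    | succ k hk ihk =>
        rw [cInfAux_stab par root w hT hroot hm hw0 hwt hsumI k v (by omega), ihk]

theorem cInfC_leaf {v : V} (hleaf : children par v = ∅) : cInfC (children par) w v = 0 := by
  refine le_antisymm (iSup_le fun k => ?_) zero_le
  cases k with
  | zero => simp [cInfAux]
  | succ k => simp [cInfAux, hleaf]

theorem rInfC_leaf {v : V} (hleaf : children par v = ∅) :
    rInfC (children par) w v = w v := by
  rw [rInfC, cInfC_leaf par root w hT hroot hm hw0 hwt hsumI hleaf]
  exact max_eq_left zero_le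

theorem cInfC_rec {v : V} (hv : children par v ≠ ∅) :
    cInfC (children par) w v = (TInf par w v)⁻¹ := by
  have h1 : cInfC (children par) w v = cInfAux (children par) w (m + 1) v := by
    rw [cInfC_eq_aux par root w hT hroot hm hw0 hwt hsumI v,
      cInfAux_stab par root w hT hroot hm hw0 hwt hsumI m v (by omega)]
  rw [h1, show cInfAux (children par) w (m+1) v
      = (∑' u : ↥(children par v), (max (w u.1) (cInfAux (children par) w m u.1))⁻¹)⁻¹
      from by simp [cInfAux, hv]]
  congr 1
  refine tsum_congr fun u => ?_
  rw [← cInfC_eq_aux par root w hT hroot hm hw0 hwt hsumI u.1]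
  rfl

theorem cInfC_lt_top : ∀ (k : ℕ) (v : V), m ≤ dpt par root v + k →
    cInfC (children par) w v < ⊤ := by
  intro k
  induction k with
  | zero =>
      intro v hv
      rw [cInfC_leaf par root w hT hroot hm hw0 hwt hsumI
        (leaf_of_dpt_eq par root hT hroot hm (by omega))]
      exact ENNReal.zero_lt_top
  | succ k ih =>
      intro v hv
      by_cases hleaf : children par v = ∅
      · rw [cInfC_leaf par root w hT hroot hm hw0 hwt hsumI hleaf]; exact ENNReal.zero_lt_top
      · rw [cInfC_rec par root w hT hroot hm hw0 hwt hsumI hleaf]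
        refine ENNReal.inv_lt_top.2 ?_
        obtain ⟨u0, hu0⟩ := Set.nonempty_iff_ne_empty.2 hleaf
        have hrf : rInfC (children par) w u0 ≠ ⊤ := by
          rw [rInfC]
          exact (max_lt (hwt u0).lt_top
            (ih u0 (by rw [dpt_child par root hT hroot hu0]; omega))).ne
        refine lt_of_lt_of_le (ENNReal.inv_pos.2 hrf) ?_
        exact ENNReal.le_tsum (⟨u0, hu0⟩ : ↥(children par v))

theorem cInfC_lt_top' (v : V) : cInfC (children par) w v < ⊤ :=
  cInfC_lt_top par root w hT hroot hm hw0 hwt hsumI m v (by omega)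

theorem rInfC_lt_top (v : V) : rInfC (children par) w v < ⊤ := by
  rw [rInfC]
  exact max_lt (hwt v).lt_top (cInfC_lt_top' par root w hT hroot hm hw0 hwt hsumI v)

theorem rInfC_pos (v : V) : 0 < rInfC (children par) w v :=
  lt_of_lt_of_le (pos_iff_ne_zero.2 (hw0 v)) (le_max_left _ _)

theorem TInf_lt_top (v : V) : TInf par w v < ⊤ := by
  refine lt_of_le_of_lt (ENNReal.tsum_le_tsum fun u => ?_) (hsumI v)
  exact ENNReal.inv_le_inv.2 (le_max_left _ _)

theorem TInf_pos {v : V} (hv : children par v ≠ ∅) : 0 < TInf par w v := by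
  obtain ⟨u0, hu0⟩ := Set.nonempty_iff_ne_empty.2 hv
  refine lt_of_lt_of_le (ENNReal.inv_pos.2
    (rInfC_lt_top par root w hT hroot hm hw0 hwt hsumI u0).ne) ?_
  exact ENNReal.le_tsum (⟨u0, hu0⟩ : ↥(children par v))

theorem ratioI_pos {v x : V} (hvx : par v = some x) : 0 < ratioI par w v := by
  rw [ratioI_eq par w hvx]
  exact ENNReal.div_pos
    (ENNReal.inv_pos.2 (rInfC_lt_top par root w hT hroot hm hw0 hwt hsumI v).ne).ne'
    (TInf_lt_top par root w hT hroot hm hw0 hwt hsumI x).ne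

theorem ratioI_lt_top {v x : V} (hvx : par v = some x) : ratioI par w v < ⊤ := by
  rw [ratioI_eq par w hvx]
  refine ENNReal.div_lt_top ?_
    (TInf_pos par root w hT hroot hm hw0 hwt hsumI
      (Set.nonempty_iff_ne_empty.1 ⟨v, hvx⟩)).ne'
  exact (ENNReal.inv_lt_top.2 (rInfC_pos par root w hT hroot hm hw0 hwt hsumI v)).ne

theorem fI_root : fI par root w 𝕜 root = 1 := by
  show pathProd _ _ (dpt par root root) root = 1
  rw [dpt_root par root hT hroot]
  rfl

theorem fI_step {v x : V} (hvx : par v = some x) :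
    fI par root w 𝕜 v = ((ratioI par w v).toReal : 𝕜) * fI par root w 𝕜 x := by
  have hdv : dpt par root v = dpt par root x + 1 := dpt_child par root hT hroot hvx
  show pathProd _ _ (dpt par root v) v = _
  rw [hdv]
  show (fun u => ((ratioI par w u).toReal : 𝕜)) v *
      ((par v).elim 1 (pathProd par _ (dpt par root x))) = _
  rw [hvx]
  rfl

theorem fI_pos : ∀ (n : ℕ) (v : V), dpt par root v = n →
    ∃ r : ℝ, 0 < r ∧ fI par root w 𝕜 v = (r : 𝕜) := by
  intro n
  induction n with
  | zero =>
      intro v hv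
      rw [eq_root_of_dpt_eq_zero par root hT hroot hv]
      exact ⟨1, one_pos, by rw [fI_root par root w hT hroot hm hw0 hwt hsumI]; simp⟩
  | succ n ih =>
      intro v hv
      have hvr : v ≠ root := by
        intro h; rw [h, dpt_root par root hT hroot] at hv; omega
      obtain ⟨x, hvx⟩ := parent_of_ne_root par root hT hroot hvr
      have hdx : dpt par root x = n := by
        have := dpt_child par root hT hroot hvx; omega
      obtain ⟨r, hr, hfx⟩ := ih x hdx
      refine ⟨(ratioI par w v).toReal * r, ?_, ?_⟩
      · exact mul_pos (ENNReal.toReal_pos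
          (ratioI_pos par root w hT hroot hm hw0 hwt hsumI hvx).ne'
          (ratioI_lt_top par root w hT hroot hm hw0 hwt hsumI hvx).ne) hr
      · rw [fI_step par root w hT hroot hm hw0 hwt hsumI hvx, hfx]
        push_cast
        ring

theorem fI_pos' (v : V) : ∃ r : ℝ, 0 < r ∧ fI par root w 𝕜 v = (r : 𝕜) :=
  fI_pos par root w hT hroot hm hw0 hwt hsumI (dpt par root v) v rfl

theorem enorm_fI_step {v x : V} (hvx : par v = some x) :
    (‖fI par root w 𝕜 v‖₊ : ℝ≥0∞) = ratioI par w v * (‖fI par root w 𝕜 x‖₊ : ℝ≥0∞) := by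
  rw [fI_step par root w hT hroot hm hw0 hwt hsumI hvx, nnnorm_mul, ENNReal.coe_mul]
  congr 1
  rw [show ‖(((ratioI par w v).toReal : ℝ) : 𝕜)‖₊ = ‖(ratioI par w v).toReal‖₊ from by simp,
    ← enorm_eq_nnnorm, Real.enorm_eq_ofReal ENNReal.toReal_nonneg,
    ENNReal.ofReal_toReal (ratioI_lt_top par root w hT hroot hm hw0 hwt hsumI hvx).ne]

theorem tsum_ratioI {v : V} (hv : children par v ≠ ∅) :
    ∑' u : ↥(children par v), ratioI par w u.1 = 1 := by
  rw [tsum_congr (fun u : ↥(children par v) => ratioI_eq par w u.2),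
    tsum_congr (fun u : ↥(children par v) => div_eq_mul_inv _ (TInf par w v)),
    ENNReal.tsum_mul_right]
  exact ENNReal.mul_inv_cancel
    (TInf_pos par root w hT hroot hm hw0 hwt hsumI hv).ne'
    (TInf_lt_top par root w hT hroot hm hw0 hwt hsumI v).ne

theorem hasSum_ratioI {v : V} (hv : children par v ≠ ∅) :
    HasSum (fun u : ↥(children par v) => ((ratioI par w u.1).toReal : 𝕜)) 1 := by
  have hne : ∀ u : ↥(children par v), ratioI par w u.1 ≠ ⊤ :=
    fun u => (ratioI_lt_top par root w hT hroot hm hw0 hwt hsumI u.2).ne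
  have h0 : ∑' u : ↥(children par v), ratioI par w u.1 ≠ ⊤ := by
    rw [tsum_ratioI par root w hT hroot hm hw0 hwt hsumI hv]
    exact ENNReal.one_ne_top
  have h1 : Summable (fun u : ↥(children par v) => (ratioI par w u.1).toReal) :=
    ENNReal.summable_toReal h0
  have h2 : ∑' u : ↥(children par v), (ratioI par w u.1).toReal = 1 := by
    rw [← ENNReal.tsum_toReal_eq hne, tsum_ratioI par root w hT hroot hm hw0 hwt hsumI hv]
    simp
  have h3 := h1.hasSum
  rw [h2] at h3
  have h4 := h3.map (algebraMap ℝ 𝕜) (by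
    rw [RCLike.algebraMap_eq_ofReal]; exact RCLike.continuous_ofReal)
  simpa [RCLike.algebraMap_eq_ofReal, Function.comp_def] using h4

theorem backwardInv_fI : BackwardInv (children par) (fI par root w 𝕜) := by
  intro v hv
  have h := (hasSum_ratioI par root w (𝕜 := 𝕜) hT hroot hm hw0 hwt hsumI hv).mul_right
    (fI par root w 𝕜 v)
  rw [one_mul] at h
  have he : (fun u : ↥(children par v) =>
      ((ratioI par w u.1).toReal : 𝕜) * fI par root w 𝕜 v)
      = fun u : ↥(children par v) => fI par root w 𝕜 u.1 :=
    funext fun u => (fI_step par root w hT hroot hm hw0 hwt hsumI u.2).symm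
  rwa [he] at h

theorem term_eq_inf {v u : V} (hu : par u = some v) :
    (‖fI par root w 𝕜 u‖₊ : ℝ≥0∞) * rInfC (children par) w u
      = (‖fI par root w 𝕜 v‖₊ : ℝ≥0∞) * (TInf par w v)⁻¹ := by
  have ha0 : rInfC (children par) w u ≠ 0 :=
    (rInfC_pos par root w hT hroot hm hw0 hwt hsumI u).ne'
  have haT : rInfC (children par) w u ≠ ⊤ :=
    (rInfC_lt_top par root w hT hroot hm hw0 hwt hsumI u).ne
  rw [enorm_fI_step par root w hT hroot hm hw0 hwt hsumI hu, ratioI_eq par w hu,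
    div_eq_mul_inv]
  calc (rInfC (children par) w u)⁻¹ * (TInf par w v)⁻¹ * (‖fI par root w 𝕜 v‖₊ : ℝ≥0∞)
      * rInfC (children par) w u
      = ((rInfC (children par) w u)⁻¹ * rInfC (children par) w u) * (TInf par w v)⁻¹
        * (‖fI par root w 𝕜 v‖₊ : ℝ≥0∞) := by ring
  _ = (‖fI par root w 𝕜 v‖₊ : ℝ≥0∞) * (TInf par w v)⁻¹ := by
      rw [ENNReal.inv_mul_cancel ha0 haT, one_mul]
      ring

theorem sup_desc_leaf {v : V} (hleaf : children par v = ∅) :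
    ⨆ x : ↥(descendants par v), (‖fI par root w 𝕜 x.1‖₊ : ℝ≥0∞) * w x.1
      = (‖fI par root w 𝕜 v‖₊ : ℝ≥0∞) * rInfC (children par) w v := by
  rw [desc_leaf par root hT hroot hleaf, rInfC_leaf par root w hT hroot hm hw0 hwt hsumI hleaf]
  exact Helpers.iSup_singleton_set v (fun y => (‖fI par root w 𝕜 y‖₊ : ℝ≥0∞) * w y)

theorem sup_desc_fI : ∀ (k : ℕ) (v : V), m ≤ dpt par root v + k →
    ⨆ x : ↥(descendants par v), (‖fI par root w 𝕜 x.1‖₊ : ℝ≥0∞) * w x.1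
      = (‖fI par root w 𝕜 v‖₊ : ℝ≥0∞) * rInfC (children par) w v := by
  intro k
  induction k with
  | zero =>
      intro v hv
      exact sup_desc_leaf par root w hT hroot hm hw0 hwt hsumI
        (leaf_of_dpt_eq par root hT hroot hm (by omega))
  | succ k ih =>
      intro v hv
      by_cases hleaf : children par v = ∅
      · exact sup_desc_leaf par root w hT hroot hm hw0 hwt hsumI hleaf
      · have hne : Nonempty ↥(children par v) :=
          (Set.nonempty_iff_ne_empty.2 hleaf).to_subtype
        rw [desc_eq par root hT hroot v,
          Helpers.iSup_insert_set _ (fun y => (‖fI par root w 𝕜 y‖₊ : ℝ≥0∞) * w y),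
          Helpers.iSup_iUnion_set _ (fun y => (‖fI par root w 𝕜 y‖₊ : ℝ≥0∞) * w y)]
        have h2 : ∀ u : ↥(children par v),
            (⨆ x : ↥(descendants par u.1), (‖fI par root w 𝕜 x.1‖₊ : ℝ≥0∞) * w x.1)
              = (‖fI par root w 𝕜 v‖₊ : ℝ≥0∞) * (TInf par w v)⁻¹ := by
          intro u
          rw [ih u.1 (by rw [dpt_child par root hT hroot u.2]; omega),
            term_eq_inf par root w hT hroot hm hw0 hwt hsumI u.2]
        rw [iSup_congr h2, iSup_const,
          ← cInfC_rec par root w hT hroot hm hw0 hwt hsumI hleaf]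
        have hmono : Monotone (fun x : ℝ≥0∞ => (‖fI par root w 𝕜 v‖₊ : ℝ≥0∞) * x) :=
          fun x y h => mul_le_mul_right h _
        rw [rInfC, ← hmono.map_max]

theorem supNorm_univ_fI :
    supNormOn w Set.univ (fI par root w 𝕜) = rInfC (children par) w root := by
  unfold supNormOn
  rw [show (Set.univ : Set V) = descendants par root from univ_eq_desc_root par root hT hroot,
    sup_desc_fI par root w hT hroot hm hw0 hwt hsumI m root (by omega),
    fI_root par root w hT hroot hm hw0 hwt hsumI]
  simp

theorem supNorm_ne_root_fI :
    supNormOn w {v : V | v ≠ root} (fI par root w 𝕜) = cInfC (children par) w root := by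
  unfold supNormOn
  rw [show {v : V | v ≠ root} = ⋃ u : ↥(children par root), descendants par u.1 from
      compl_root_eq par root hT hroot,
    Helpers.iSup_iUnion_set _ (fun y => (‖fI par root w 𝕜 y‖₊ : ℝ≥0∞) * w y)]
  by_cases hleaf : children par root = ∅
  · have : IsEmpty ↥(children par root) := by rw [hleaf]; exact Set.isEmpty_coe_sort.2 rfl
    rw [iSup_of_empty, cInfC_leaf par root w hT hroot hm hw0 hwt hsumI hleaf]
    rfl
  · have hne : Nonempty ↥(children par root) :=
      (Set.nonempty_iff_ne_empty.2 hleaf).to_subtype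
    have h2 : ∀ u : ↥(children par root),
        (⨆ x : ↥(descendants par u.1), (‖fI par root w 𝕜 x.1‖₊ : ℝ≥0∞) * w x.1)
          = (‖fI par root w 𝕜 root‖₊ : ℝ≥0∞) * (TInf par w root)⁻¹ := by
      intro u
      rw [sup_desc_fI par root w hT hroot hm hw0 hwt hsumI m u.1 (by omega),
        term_eq_inf par root w hT hroot hm hw0 hwt hsumI u.2]
    rw [iSup_congr h2, iSup_const, fI_root par root w hT hroot hm hw0 hwt hsumI,
      ← cInfC_rec par root w hT hroot hm hw0 hwt hsumI hleaf]
    simp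

end FactsI
end PartB

section Uniq
set_option linter.unusedSectionVars false
open scoped ENNReal NNReal

namespace Helpers

theorem mid_le {p : ℝ} (hp : 1 ≤ p) (x y : ℝ≥0∞) :
    ((x + y) / 2) ^ p ≤ (x ^ p + y ^ p) / 2 := by
  have h := ENNReal.rpow_arith_mean_le_arith_mean2_rpow 2⁻¹ 2⁻¹ x y
    ENNReal.inv_two_add_inv_two hp
  calc ((x + y) / 2) ^ p = (2⁻¹ * x + 2⁻¹ * y) ^ p := by
        rw [div_eq_mul_inv, add_mul]; ring_nf
  _ ≤ 2⁻¹ * x ^ p + 2⁻¹ * y ^ p := h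
  _ = (x ^ p + y ^ p) / 2 := by rw [div_eq_mul_inv, add_mul]; ring

theorem mid_eq {p : ℝ} (hp : 1 < p) {x y : ℝ≥0∞} (hx : x ≠ ⊤) (hy : y ≠ ⊤)
    (h : ((x + y) / 2) ^ p = (x ^ p + y ^ p) / 2) : x = y := by
  have hp0 : (0:ℝ) < p := by linarith
  have hxp : x ^ p ≠ ⊤ := (ENNReal.rpow_lt_top_of_nonneg hp0.le hx).ne
  have hyp : y ^ p ≠ ⊤ := (ENNReal.rpow_lt_top_of_nonneg hp0.le hy).ne
  have hr : ((x.toReal + y.toReal) / 2) ^ p = (x.toReal ^ p + y.toReal ^ p) / 2 := by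
    have h2 := congrArg ENNReal.toReal h
    rw [ENNReal.toReal_div, ← ENNReal.toReal_rpow, ENNReal.toReal_div,
      ENNReal.toReal_add hx hy, ENNReal.toReal_add hxp hyp, ← ENNReal.toReal_rpow,
      ← ENNReal.toReal_rpow] at h2
    simpa using h2
  have := rpow_half_strict hp ENNReal.toReal_nonneg ENNReal.toReal_nonneg hr
  exact (ENNReal.toReal_eq_toReal_iff' hx hy).1 this

theorem enorm_half {𝕜 : Type*} [RCLike 𝕜] (x y : 𝕜) :
    (‖(x + y) / 2‖₊ : ℝ≥0∞) = (‖x + y‖₊ : ℝ≥0∞) / 2 := by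
  rw [nnnorm_div, ENNReal.coe_div (by simp : (‖(2:𝕜)‖₊) ≠ 0)]
  congr 1
  simp

theorem half_le {𝕜 : Type*} [RCLike 𝕜] {p : ℝ} (hp : 1 < p) (x y : 𝕜) (c : ℝ≥0∞) :
    ((‖(x + y) / 2‖₊ : ℝ≥0∞) * c) ^ p
      ≤ (((‖x‖₊ : ℝ≥0∞) * c) ^ p + ((‖y‖₊ : ℝ≥0∞) * c) ^ p) / 2 := by
  have hp0 : (0:ℝ) < p := by linarith
  have h1 : (‖(x + y) / 2‖₊ : ℝ≥0∞) * c
      ≤ ((‖x‖₊ : ℝ≥0∞) * c + (‖y‖₊ : ℝ≥0∞) * c) / 2 := by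
    rw [enorm_half]
    calc (‖x + y‖₊ : ℝ≥0∞) / 2 * c ≤ ((‖x‖₊ : ℝ≥0∞) + (‖y‖₊ : ℝ≥0∞)) / 2 * c := by
          refine mul_le_mul_left (ENNReal.div_le_div_right ?_ 2) c
          exact_mod_cast nnnorm_add_le x y
    _ = ((‖x‖₊ : ℝ≥0∞) * c + (‖y‖₊ : ℝ≥0∞) * c) / 2 := by
        rw [div_eq_mul_inv, div_eq_mul_inv, add_mul]; ring
  exact le_trans (ENNReal.rpow_le_rpow h1 hp0.le) (mid_le hp.le _ _)

theorem half_eq {𝕜 : Type*} [RCLike 𝕜] {p : ℝ} (hp : 1 < p) (x y : 𝕜) {c : ℝ≥0∞}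
    (hc0 : c ≠ 0) (hcT : c ≠ ⊤)
    (h : ((‖(x + y) / 2‖₊ : ℝ≥0∞) * c) ^ p
      = (((‖x‖₊ : ℝ≥0∞) * c) ^ p + ((‖y‖₊ : ℝ≥0∞) * c) ^ p) / 2) :
    ‖x + y‖ = ‖x‖ + ‖y‖ ∧ ‖x‖ = ‖y‖ := by
  have hp0 : (0:ℝ) < p := by linarith
  have hXt : (‖x‖₊ : ℝ≥0∞) * c ≠ ⊤ := ENNReal.mul_ne_top ENNReal.coe_ne_top hcT
  have hYt : (‖y‖₊ : ℝ≥0∞) * c ≠ ⊤ := ENNReal.mul_ne_top ENNReal.coe_ne_top hcT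
  have h1 : (‖(x + y) / 2‖₊ : ℝ≥0∞) * c
      ≤ ((‖x‖₊ : ℝ≥0∞) * c + (‖y‖₊ : ℝ≥0∞) * c) / 2 := by
    rw [enorm_half]
    calc (‖x + y‖₊ : ℝ≥0∞) / 2 * c ≤ ((‖x‖₊ : ℝ≥0∞) + (‖y‖₊ : ℝ≥0∞)) / 2 * c := by
          refine mul_le_mul_left (ENNReal.div_le_div_right ?_ 2) c
          exact_mod_cast nnnorm_add_le x y
    _ = ((‖x‖₊ : ℝ≥0∞) * c + (‖y‖₊ : ℝ≥0∞) * c) / 2 := by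
        rw [div_eq_mul_inv, div_eq_mul_inv, add_mul]; ring
  have hL_le_M := ENNReal.rpow_le_rpow h1 hp0.le
  have hM_le_R := mid_le hp.le ((‖x‖₊ : ℝ≥0∞) * c) ((‖y‖₊ : ℝ≥0∞) * c)
  have hM_eq : (((‖x‖₊ : ℝ≥0∞) * c + (‖y‖₊ : ℝ≥0∞) * c) / 2) ^ p
      = (((‖x‖₊ : ℝ≥0∞) * c) ^ p + ((‖y‖₊ : ℝ≥0∞) * c) ^ p) / 2 :=
    le_antisymm hM_le_R (h ▸ hL_le_M)
  have hXY : (‖x‖₊ : ℝ≥0∞) * c = (‖y‖₊ : ℝ≥0∞) * c := mid_eq hp hXt hYt hM_eq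
  have hnxy : ‖x‖ = ‖y‖ := by
    have := (ENNReal.mul_left_inj hc0 hcT).1 hXY
    have h2 : ‖x‖₊ = ‖y‖₊ := by exact_mod_cast this
    exact congrArg NNReal.toReal h2
  refine ⟨?_, hnxy⟩
  have hL_eq : ((‖(x + y) / 2‖₊ : ℝ≥0∞) * c) ^ p
      = (((‖x‖₊ : ℝ≥0∞) * c + (‖y‖₊ : ℝ≥0∞) * c) / 2) ^ p := by rw [h, hM_eq]
  have hbase := ENNReal.rpow_left_injective hp0.ne' hL_eq
  rw [enorm_half] at hbase
  have h3 : (‖x + y‖₊ : ℝ≥0∞) * c * 2⁻¹ = ((‖x‖₊ : ℝ≥0∞) + (‖y‖₊ : ℝ≥0∞)) * c * 2⁻¹ := by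
    calc (‖x + y‖₊ : ℝ≥0∞) * c * 2⁻¹ = (‖x + y‖₊ : ℝ≥0∞) / 2 * c := by
          rw [div_eq_mul_inv]; ring
    _ = ((‖x‖₊ : ℝ≥0∞) * c + (‖y‖₊ : ℝ≥0∞) * c) / 2 := hbase
    _ = _ := by rw [div_eq_mul_inv, add_mul]; ring
  have h4 := (ENNReal.mul_left_inj (by simp) (by simp)).1 h3
  have h5 := (ENNReal.mul_left_inj hc0 hcT).1 h4
  have h6 : ‖x + y‖₊ = ‖x‖₊ + ‖y‖₊ := by exact_mod_cast h5
  calc ‖x + y‖ = ((‖x + y‖₊ : ℝ≥0) : ℝ) := rfl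
  _ = ((‖x‖₊ + ‖y‖₊ : ℝ≥0) : ℝ) := by rw [h6]
  _ = ‖x‖ + ‖y‖ := by push_cast; rfl

theorem conclude_eq {𝕜 : Type*} [RCLike 𝕜] {p : ℝ} (hp : 1 < p) {r : ℝ} (hr : 0 < r)
    {b : 𝕜} {c : ℝ≥0∞} (hc0 : c ≠ 0) (hcT : c ≠ ⊤)
    (h : ((‖((r : 𝕜) + b) / 2‖₊ : ℝ≥0∞) * c) ^ p
      = (((‖(r : 𝕜)‖₊ : ℝ≥0∞) * c) ^ p + ((‖b‖₊ : ℝ≥0∞) * c) ^ p) / 2) : b = (r : 𝕜) := by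
  obtain ⟨hadd, hnorm⟩ := half_eq hp _ _ hc0 hcT h
  have hnr : ‖(r : 𝕜)‖ = r := by
    rw [RCLike.norm_ofReal]
    exact abs_of_pos hr
  exact eq_of_norm_add_eq hr (by rw [← hnorm, hnr]) (by rw [hadd, hnr])

end Helpers
end Uniq

/-- Theorem 6.4 / `t-charfinpmin`: on a rooted tree of finite length,
existence (and uniqueness, for `1 < p < ∞`) of backward invariant sequences of minimal
norm, together with their explicit product formula. The product formula along paths is
expressed by its equivalent recursive form `f v = ratio(v) * f (par v)`, `f root = 1`. -/
theorem statement6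
    {𝕜 : Type*} [RCLike 𝕜] {V : Type*} (par : V → Option V) (hTree : IsDirectedTree par)
    (hfin : FiniteLength par) (root : V) (hroot : IsRoot par root)
    (μ : V → 𝕜) (hμ : ∀ v : V, μ v ≠ 0) :
    -- (a) `1 < p < ∞`
    (∀ p : ℝ, 1 < p →
      (∀ v : V, (∑' u : ↥(children par v), nw μ u.1 ^ (-(conjExp p))) < ⊤) →
      ∃ f : V → 𝕜,
        (BackwardInv (children par) f ∧ f root = 1 ∧
          lpSumOn (nw μ) p Set.univ f = rpC (children par) (nw μ) p root ∧
          lpSumOn (nw μ) p {v : V | v ≠ root} f = cpC (children par) (nw μ) p root ∧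
          (∀ v w : V, par v = some w →
            f v = (((rpC (children par) (nw μ) p v ^ (-(conjExp p)) /
                  ∑' u : ↥(children par w),
                    rpC (children par) (nw μ) p u.1 ^ (-(conjExp p))).toReal : 𝕜)) * f w) ∧
          ∀ v : V, ∃ r : ℝ, 0 < r ∧ f v = (r : 𝕜)) ∧
        ∀ g : V → 𝕜, BackwardInv (children par) g → g root = 1 →
          (lpSumOn (nw μ) p Set.univ g = rpC (children par) (nw μ) p root ∨
            lpSumOn (nw μ) p {v : V | v ≠ root} g = cpC (children par) (nw μ) p root) →
          g = f) ∧
    -- (b) `p = ∞`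
    ((∀ v : V, (∑' u : ↥(children par v), (nw μ u.1)⁻¹) < ⊤) →
      ∃ f : V → 𝕜,
        BackwardInv (children par) f ∧ f root = 1 ∧
        supNormOn (nw μ) Set.univ f = rInfC (children par) (nw μ) root ∧
        supNormOn (nw μ) {v : V | v ≠ root} f = cInfC (children par) (nw μ) root ∧
        (∀ v w : V, par v = some w →
          f v = ((((rInfC (children par) (nw μ) v)⁻¹ /
                ∑' u : ↥(children par w), (rInfC (children par) (nw μ) u.1)⁻¹).toReal : 𝕜)) * f w) ∧
        ∀ v : V, ∃ r : ℝ, 0 < r ∧ f v = (r : 𝕜)) := by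
  classical
  obtain ⟨m, hm⟩ := hfin
  have hw0 : ∀ v : V, nw μ v ≠ 0 := fun v => by
    simp only [nw, ne_eq, ENNReal.coe_eq_zero, nnnorm_eq_zero]
    exact hμ v
  have hwt : ∀ v : V, nw μ v ≠ ⊤ := fun _ => ENNReal.coe_ne_top
  have huniv : (Set.univ : Set V) = descendants par root :=
    TreeLemmas.univ_eq_desc_root par root hTree hroot
  constructor
  · -- part (a)
    intro p hp hsum
    have hp0 : (0:ℝ) < p := by linarith
    refine ⟨fA par root (nw μ) 𝕜 p, ⟨?_, ?_, ?_, ?_, ?_, ?_⟩, ?_⟩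
    · exact backwardInv_fA par root (nw μ) hTree hroot hm hw0 hwt hp hsum
    · exact fA_root par root (nw μ) hTree hroot hm hw0 hwt hp hsum
    · exact lpSum_univ_fA par root (nw μ) hTree hroot hm hw0 hwt hp hsum
    · exact lpSum_ne_root_fA par root (nw μ) hTree hroot hm hw0 hwt hp hsum
    · intro v x hvx
      rw [fA_step par root (nw μ) hTree hroot hm hw0 hwt hp hsum hvx, ratioP_eq par (nw μ) hvx]
      rfl
    · exact fun v => fA_pos' par root (nw μ) hTree hroot hm hw0 hwt hp hsum v
    · -- uniqueness
      intro g hgB hgroot hnorm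
      have hrpT : rpC (children par) (nw μ) p root ≠ ⊤ :=
        (rpC_lt_top par root (nw μ) hTree hroot hm hw0 hwt hp hsum root).ne
      have hrppT : rpC (children par) (nw μ) p root ^ p ≠ ⊤ :=
        (ENNReal.rpow_lt_top_of_nonneg hp0.le hrpT).ne
      have hins : (Set.univ : Set V) = insert root {v : V | v ≠ root} := by
        ext x
        by_cases hx : x = root <;> simp [hx]
      have hroot_notmem : root ∉ {v : V | v ≠ root} := by simp
      have hdecomp : ∀ h : V → 𝕜,
          (∑' x : ↥(Set.univ : Set V), ((‖h x.1‖₊ : ℝ≥0∞) * nw μ x.1) ^ p)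
            = ((‖h root‖₊ : ℝ≥0∞) * nw μ root) ^ p
              + ∑' x : ↥{v : V | v ≠ root}, ((‖h x.1‖₊ : ℝ≥0∞) * nw μ x.1) ^ p := by
        intro h
        rw [hins, Helpers.tsum_insert_enn hroot_notmem
          (fun y => ((‖h y‖₊ : ℝ≥0∞) * nw μ y) ^ p)]
      -- the sum of g equals rpC root ^ p
      have hSg : (∑' x : ↥(Set.univ : Set V), ((‖g x.1‖₊ : ℝ≥0∞) * nw μ x.1) ^ p)
          = rpC (children par) (nw μ) p root ^ p := by
        rcases hnorm with hn | hn
        · simp only [lpSumOn] at hn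
          have h2 := congrArg (fun z : ℝ≥0∞ => z ^ p) hn
          rwa [← ENNReal.rpow_mul, one_div, inv_mul_cancel₀ hp0.ne', ENNReal.rpow_one] at h2
        · simp only [lpSumOn] at hn
          have h2 := congrArg (fun z : ℝ≥0∞ => z ^ p) hn
          rw [← ENNReal.rpow_mul, one_div, inv_mul_cancel₀ hp0.ne', ENNReal.rpow_one] at h2
          rw [hdecomp g, h2, hgroot]
          simp only [nnnorm_one, ENNReal.coe_one, one_mul]
          rw [← rpC_pow par root (nw μ) hTree hroot hm hw0 hwt hp hsum root]
      -- minimality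
      have hmin : ∀ h : V → 𝕜, BackwardInv (children par) h → h root = 1 →
          rpC (children par) (nw μ) p root ^ p
            ≤ ∑' x : ↥(Set.univ : Set V), ((‖h x.1‖₊ : ℝ≥0∞) * nw μ x.1) ^ p := by
        intro h hB h1
        have h2 := sum_ge_g par root (nw μ) hTree hroot hm hw0 hwt hp hsum h hB m root (by omega)
        rw [← huniv, h1] at h2
        simpa only [nnnorm_one, ENNReal.coe_one, one_mul] using h2
      -- sum of f
      have hSf : (∑' x : ↥(Set.univ : Set V),
            ((‖fA par root (nw μ) 𝕜 p x.1‖₊ : ℝ≥0∞) * nw μ x.1) ^ p)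
          = rpC (children par) (nw μ) p root ^ p := by
        have h2 := sum_desc_fA par root (nw μ) (𝕜 := 𝕜) hTree hroot hm hw0 hwt hp hsum m root
          (by omega)
        rw [← huniv, fA_root par root (nw μ) hTree hroot hm hw0 hwt hp hsum] at h2
        simpa only [nnnorm_one, ENNReal.coe_one, one_mul] using h2
      -- the midpoint sequence
      set h : V → 𝕜 := fun v => (fA par root (nw μ) 𝕜 p v + g v) / 2 with hhdef
      have hhB : BackwardInv (children par) h := by
        intro v hv
        exact ((backwardInv_fA par root (nw μ) hTree hroot hm hw0 hwt hp hsum v hv).add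
          (hgB v hv)).div_const 2
      have hhroot : h root = 1 := by
        rw [hhdef]
        simp only
        rw [fA_root par root (nw μ) hTree hroot hm hw0 hwt hp hsum, hgroot]
        norm_num
      have hptle : ∀ x : V,
          ((‖h x‖₊ : ℝ≥0∞) * nw μ x) ^ p
            ≤ (((‖fA par root (nw μ) 𝕜 p x‖₊ : ℝ≥0∞) * nw μ x) ^ p
                + ((‖g x‖₊ : ℝ≥0∞) * nw μ x) ^ p) / 2 :=
        fun x => Helpers.half_le hp _ _ _
      have hSG : (∑' x : ↥(Set.univ : Set V),
            ((((‖fA par root (nw μ) 𝕜 p x.1‖₊ : ℝ≥0∞) * nw μ x.1) ^ p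
              + ((‖g x.1‖₊ : ℝ≥0∞) * nw μ x.1) ^ p) / 2))
          = rpC (children par) (nw μ) p root ^ p := by
        have e1 : ∀ x : ↥(Set.univ : Set V),
            (((‖fA par root (nw μ) 𝕜 p x.1‖₊ : ℝ≥0∞) * nw μ x.1) ^ p
              + ((‖g x.1‖₊ : ℝ≥0∞) * nw μ x.1) ^ p) / 2
            = (((‖fA par root (nw μ) 𝕜 p x.1‖₊ : ℝ≥0∞) * nw μ x.1) ^ p
              + ((‖g x.1‖₊ : ℝ≥0∞) * nw μ x.1) ^ p) * 2⁻¹ :=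
          fun x => by rw [div_eq_mul_inv]
        rw [tsum_congr e1, ENNReal.tsum_mul_right, ENNReal.tsum_add, hSf, hSg, ← two_mul,
          mul_comm (2 : ℝ≥0∞), mul_assoc,
          ENNReal.mul_inv_cancel two_ne_zero ENNReal.ofNat_ne_top, mul_one]
      have hSh_ge := hmin h hhB hhroot
      have hSh_le : (∑' x : ↥(Set.univ : Set V), ((‖h x.1‖₊ : ℝ≥0∞) * nw μ x.1) ^ p)
          ≤ ∑' x : ↥(Set.univ : Set V),
              ((((‖fA par root (nw μ) 𝕜 p x.1‖₊ : ℝ≥0∞) * nw μ x.1) ^ p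
                + ((‖g x.1‖₊ : ℝ≥0∞) * nw μ x.1) ^ p) / 2) :=
        ENNReal.tsum_le_tsum fun x => hptle x.1
      have hShEq : (∑' x : ↥(Set.univ : Set V), ((‖h x.1‖₊ : ℝ≥0∞) * nw μ x.1) ^ p)
          = ∑' x : ↥(Set.univ : Set V),
              ((((‖fA par root (nw μ) 𝕜 p x.1‖₊ : ℝ≥0∞) * nw μ x.1) ^ p
                + ((‖g x.1‖₊ : ℝ≥0∞) * nw μ x.1) ^ p) / 2) :=
        le_antisymm hSh_le (by rw [hSG]; exact hSh_ge)
      have hShTree : (∑' x : ↥(Set.univ : Set V), ((‖h x.1‖₊ : ℝ≥0∞) * nw μ x.1) ^ p) ≠ ⊤ := by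
        rw [hShEq, hSG]; exact hrppT
      have hpt : ∀ x : ↥(Set.univ : Set V),
          ((‖h x.1‖₊ : ℝ≥0∞) * nw μ x.1) ^ p
            = (((‖fA par root (nw μ) 𝕜 p x.1‖₊ : ℝ≥0∞) * nw μ x.1) ^ p
                + ((‖g x.1‖₊ : ℝ≥0∞) * nw μ x.1) ^ p) / 2 := by
        intro x
        by_contra hne
        have hlt := lt_of_le_of_ne (hptle x.1) hne
        exact absurd hShEq
          (ne_of_lt (ENNReal.tsum_lt_tsum hShTree (fun a => hptle a.1) hlt))
      funext v
      obtain ⟨r, hr, hfv⟩ := fA_pos' par root (nw μ) (𝕜 := 𝕜) hTree hroot hm hw0 hwt hp hsum v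
      have hv := hpt ⟨v, trivial⟩
      simp only [hhdef] at hv
      rw [hfv] at hv
      rw [hfv]
      exact Helpers.conclude_eq hp hr (hw0 v) (hwt v) hv
  · -- part (b)
    intro hsumI
    refine ⟨fI par root (nw μ) 𝕜, ?_, ?_, ?_, ?_, ?_, ?_⟩
    · exact backwardInv_fI par root (nw μ) hTree hroot hm hw0 hwt hsumI
    · exact fI_root par root (nw μ) hTree hroot hm hw0 hwt hsumI
    · exact supNorm_univ_fI par root (nw μ) hTree hroot hm hw0 hwt hsumI
    · exact supNorm_ne_root_fI par root (nw μ) hTree hroot hm hw0 hwt hsumI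
    · intro v x hvx
      rw [fI_step par root (nw μ) hTree hroot hm hw0 hwt hsumI hvx, ratioI_eq par (nw μ) hvx]
      rfl
    · exact fun v => fI_pos' par root (nw μ) hTree hroot hm hw0 hwt hsumI v

end PaperTree
end

section
/- Let V be a rooted directed tree with root v0 and μ=(μ_v)_{v∈V} a weight of nonzero scalars. Let 𝒥 be the set of all backward invariant sequences f on V with f(v0)=1. Then: (a) inf_{f∈𝒥} ∑_{v∈V}|f(v)μ_v| = r_1(V,μ) and inf_{f∈𝒥} ∑_{v∈V,v≠v0}|f(v)μ_v| = c_1(V,μ). (b) If r_1(V,μ)<∞ (equivalently c_1(V,μ)<∞), then there is a branch (v0,v1,v2,…) starting from v0 with ∑_{n≥0}|μ_{v_n}|<∞, and for any such branch the indicator sequence f=∑_{n≥0} e_{v_n} (f(v_n)=1 for all n, f=0 elsewhere) is a backward invariant sequence in ℓ^1(V,μ) with f(v0)=1. -/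
open scoped ENNReal NNReal Topology Classical
open Filter

namespace PaperTree

/-! ### Directed trees -/

variable {V : Type*}

/-! ### The constants `c_1` and `r_1` -/

section COne

variable {V : Type*}

/-- `∑_{n ≥ 1} w(v_n)` along an (optional) branch `(v_0, v_1, v_2, …)`. -/
noncomputable def branchTail (w : V → ℝ≥0∞) (b : ℕ → Option V) : ℝ≥0∞ :=
  ∑' n : ℕ, (b (n + 1)).elim 0 w

/-- `c_1(V(v), w)`: the infimum over all branches starting at `v` of `∑_{n ≥ 1} w(v_n)`. -/
noncomputable def c1C (par : V → Option V) (w : V → ℝ≥0∞) (v : V) : ℝ≥0∞ :=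
  ⨅ b ∈ {b : ℕ → Option V | IsOptBranch par v b}, branchTail w b

/-- `r_1(V(v), w)`. -/
noncomputable def r1C (par : V → Option V) (w : V → ℝ≥0∞) (v : V) : ℝ≥0∞ :=
  w v + c1C par w v

end COne

section Helpers

variable {V : Type*}

theorem parIter_add (par : V → Option V) (m n : ℕ) (x : V) :
    parIter par (m + n) x = (parIter par m x).bind (parIter par n) := by
  induction m generalizing x with
  | zero => simp [parIter]
  | succ m ih =>
      rw [show m + 1 + n = (m + n) + 1 from by omega]
      show (par x).bind (parIter par (m + n)) = ((par x).bind (parIter par m)).bind _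
      cases hp : par x with
      | none => rfl
      | some y => exact ih y

theorem mem_children_iff (par : V → Option V) {u v : V} :
    u ∈ children par v ↔ par u = some v := Iff.rfl

theorem mem_descendants_self (par : V → Option V) (v : V) : v ∈ descendants par v := ⟨0, rfl⟩

theorem descendants_child_subset (par : V → Option V) (hT : IsDirectedTree par)
    {u v : V} (hu : u ∈ children par v) :
    descendants par u ⊆ descendants par v \ {v} := by
  have hpu : par u = some v := hu
  rintro x ⟨n, hn⟩
  have hx : parIter par (n + 1) x = some v := by
    rw [parIter_add par n 1, hn]
    simp [parIter, hpu]
  refine ⟨⟨n+1, hx⟩, ?_⟩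
  intro hxv
  simp only [Set.mem_singleton_iff] at hxv
  subst hxv
  exact hT.acyclic x (n+1) (Nat.succ_pos n) hx

theorem descendants_disjoint (par : V → Option V) (hT : IsDirectedTree par)
    {u u' v : V} (hu : u ∈ children par v) (hu' : u' ∈ children par v) (hne : u ≠ u')
    {x : V} (hx : x ∈ descendants par u) (hx' : x ∈ descendants par u') : False := by
  obtain ⟨m, hm⟩ := hx
  obtain ⟨n, hn⟩ := hx'
  -- wlog m ≤ n
  rcases le_total m n with h | h
  · -- parIter (n-m) u = some u'
    have key : parIter par (n - m) u = some u' := by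
      have := parIter_add par m (n - m) x
      rw [Nat.add_sub_cancel' h] at this
      rw [hn, hm] at this
      exact this.symm
    rcases Nat.eq_zero_or_pos (n - m) with h0 | h0
    · rw [h0] at key; exact hne (Option.some_injective _ key)
    · obtain ⟨j, hj⟩ := Nat.exists_eq_add_of_lt h0
      rw [show n - m = j + 1 from by omega] at key
      have key2 : parIter par j v = some u' := by
        have : (par u).bind (parIter par j) = some u' := key
        rwa [show par u = some v from hu] at this
      have : parIter par (j + 1) u' = some u' := by
        show (par u').bind (parIter par j) = some u'
        rw [show par u' = some v from hu']; exact key2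
      exact hT.acyclic u' (j+1) (Nat.succ_pos j) this
  · have key : parIter par (m - n) u' = some u := by
      have := parIter_add par n (m - n) x
      rw [Nat.add_sub_cancel' h] at this
      rw [hn, hm] at this
      exact this.symm
    rcases Nat.eq_zero_or_pos (m - n) with h0 | h0
    · rw [h0] at key; exact hne (Option.some_injective _ key).symm
    · obtain ⟨j, hj⟩ := Nat.exists_eq_add_of_lt h0
      rw [show m - n = j + 1 from by omega] at key
      have key2 : parIter par j v = some u := by
        have : (par u').bind (parIter par j) = some u := key
        rwa [show par u' = some v from hu'] at this
      have : parIter par (j + 1) u = some u := by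
        show (par u).bind (parIter par j) = some u
        rw [show par u = some v from hu]; exact key2
      exact hT.acyclic u (j+1) (Nat.succ_pos j) this

theorem descendants_root_eq_univ (par : V → Option V) (hT : IsDirectedTree par)
    {root : V} (hroot : IsRoot par root) : descendants par root = Set.univ := by
  have hiter : ∀ n, 0 < n → parIter par n root = none := by
    intro n hn
    obtain ⟨j, rfl⟩ : ∃ j, n = j + 1 := ⟨n - 1, by omega⟩
    show (par root).bind (parIter par j) = none
    rw [show par root = none from hroot]; rfl
  ext u
  simp only [Set.mem_univ, iff_true]
  obtain ⟨m, n, w, hm, hn⟩ := hT.connected u root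
  rcases Nat.eq_zero_or_pos n with h0 | h0
  · rw [h0] at hn
    have : root = w := Option.some_injective _ hn
    exact ⟨m, by rw [hm, ← this]⟩
  · rw [hiter n h0] at hn; exact absurd hn (by simp)

end Helpers

section Branches

variable {V : Type*}

theorem optBranch_none_succ {par : V → Option V} {v : V} {b : ℕ → Option V}
    (hb : IsOptBranch par v b) {k : ℕ} (h : b k = none) : ∀ j, k ≤ j → b j = none := by
  intro j hj
  obtain ⟨i, rfl⟩ := Nat.exists_eq_add_of_le hj
  induction i with
  | zero => exact h
  | succ i ih => exact hb.2.2 (k + i) (ih (Nat.le_add_right _ _))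

theorem optBranch_back {par : V → Option V} {v : V} {b : ℕ → Option V}
    (hb : IsOptBranch par v b) (j : ℕ) :
    ∀ (k : ℕ) (x : V), b (k + j) = some x → ∃ y, b k = some y ∧ parIter par j x = some y := by
  induction j with
  | zero => intro k x hx; exact ⟨x, hx, rfl⟩
  | succ j ih =>
      intro k x hx
      -- b (k+j) is some
      cases hkj : b (k + j) with
      | none =>
          have := optBranch_none_succ hb hkj (k + j + 1) (Nat.le_succ _)
          rw [show k + (j+1) = k + j + 1 from rfl] at hx
          rw [this] at hx; exact absurd hx (by simp)
      | some w =>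
          rcases hb.2.1 (k+j) w hkj with ⟨_, hnone⟩ | ⟨u, hu, hsucc⟩
          · rw [show k + (j+1) = k + j + 1 from rfl, hnone] at hx
            exact absurd hx (by simp)
          · rw [show k + (j+1) = k + j + 1 from rfl, hsucc] at hx
            have hxu : x = u := Option.some_injective _ hx.symm
            obtain ⟨y, hky, hy⟩ := ih k w hkj
            refine ⟨y, hky, ?_⟩
            rw [hxu]
            show (par u).bind (parIter par j) = some y
            rw [show par u = some w from hu]
            exact hy

theorem optBranch_inj {par : V → Option V} (hT : IsDirectedTree par) {v : V}
    {b : ℕ → Option V} (hb : IsOptBranch par v b) {m n : ℕ} {x : V}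
    (hm : b m = some x) (hn : b n = some x) : m = n := by
  rcases Nat.lt_trichotomy m n with h | h | h
  · exfalso
    obtain ⟨y, hy1, hy2⟩ := optBranch_back hb (n - m) m x (by rwa [Nat.add_sub_cancel' h.le])
    have heq : y = x := Option.some_injective _ (hy1.symm.trans hm)
    rw [heq] at hy2
    exact hT.acyclic x (n - m) (by omega) hy2
  · exact h
  · exfalso
    obtain ⟨y, hy1, hy2⟩ := optBranch_back hb (m - n) n x (by rwa [Nat.add_sub_cancel' h.le])
    have heq : y = x := Option.some_injective _ (hy1.symm.trans hn)
    rw [heq] at hy2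
    exact hT.acyclic x (m - n) (by omega) hy2

/-- A child of `v` lying on a branch forces `v` on the branch one step earlier. -/
theorem optBranch_child_mem {par : V → Option V} (hT : IsDirectedTree par) {r : V}
    (hr : IsRoot par r)
    {b : ℕ → Option V} (hb : IsOptBranch par r b) {v u : V} (hu : u ∈ children par v)
    {n : ℕ} (hn : b n = some u) : ∃ k, n = k + 1 ∧ b k = some v := by
  cases n with
  | zero =>
      exfalso
      have : u = r := Option.some_injective _ (hn.symm.trans hb.1)
      subst this
      have h2 : (none : Option V) = some v := by
        rw [← show par u = none from hr]; exact hu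
      exact absurd h2 (by simp)
  | succ k =>
      obtain ⟨y, hky, hy⟩ := optBranch_back hb 1 k u (by rwa [show k + 1 = k + 1 from rfl])
      have hyv : y = v := by
        have : parIter par 1 u = some v := by
          show (par u).bind (parIter par 0) = some v
          rw [show par u = some v from hu]; rfl
        exact Option.some_injective _ (hy.symm.trans this)
      subst hyv
      exact ⟨k, rfl, hky⟩

end Branches

section Indicator

variable {𝕜 : Type*} [RCLike 𝕜] {V : Type*}

/-- The indicator sequence of a branch. -/
noncomputable def brInd (𝕜 : Type*) [RCLike 𝕜] (b : ℕ → Option V) : V → 𝕜 :=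
  fun v => if ∃ n : ℕ, b n = some v then (1 : 𝕜) else 0

theorem brInd_backwardInv {par : V → Option V} (hT : IsDirectedTree par) {root : V}
    (hroot : IsRoot par root) {b : ℕ → Option V} (hb : IsOptBranch par root b) :
    BackwardInv (children par) (brInd 𝕜 b) := by
  intro v hne
  by_cases hv : ∃ k, b k = some v
  · obtain ⟨k, hk⟩ := hv
    rcases hb.2.1 k v hk with ⟨hleaf, _⟩ | ⟨u, hu, hsucc⟩
    · exact absurd hleaf hne
    · have hval : brInd 𝕜 b v = 1 := if_pos ⟨k, hk⟩
      have hfun : (fun u' : ↥(children par v) => brInd 𝕜 b u'.1)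
          = fun u' : ↥(children par v) =>
              if u' = (⟨u, hu⟩ : ↥(children par v)) then (1 : 𝕜) else 0 := by
        funext u'
        obtain ⟨u', hu'⟩ := u'
        by_cases h' : ∃ m, b m = some u'
        · obtain ⟨m, hm⟩ := h'
          obtain ⟨j, rfl, hj⟩ := optBranch_child_mem hT hroot hb hu' hm
          have hjk : j = k := optBranch_inj hT hb hj hk
          subst hjk
          have huu : u' = u := Option.some_injective _ (hm.symm.trans hsucc)
          subst huu
          rw [if_pos rfl, brInd, if_pos ⟨j + 1, hm⟩]
        · have hne2 : ¬ ((⟨u', hu'⟩ : ↥(children par v)) = ⟨u, hu⟩) := by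
            intro h
            rw [Subtype.mk.injEq] at h
            exact h' ⟨k + 1, by rw [h]; exact hsucc⟩
          rw [if_neg hne2, brInd, if_neg h']
      rw [hval, hfun]
      exact hasSum_ite_eq _ _
  · have hval : brInd 𝕜 b v = 0 := if_neg hv
    have hfun : (fun u' : ↥(children par v) => brInd 𝕜 b u'.1)
        = fun _ : ↥(children par v) => (0 : 𝕜) := by
      funext u'
      obtain ⟨u', hu'⟩ := u'
      apply if_neg
      rintro ⟨m, hm⟩
      obtain ⟨j, rfl, hj⟩ := optBranch_child_mem hT hroot hb hu' hm
      exact hv ⟨j, hj⟩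
    rw [hval, hfun]
    exact hasSum_zero

theorem brInd_root {par : V → Option V} {root : V} {b : ℕ → Option V}
    (hb : IsOptBranch par root b) : brInd 𝕜 b root = 1 := if_pos ⟨0, hb.1⟩

end Indicator

section Tsums

variable {𝕜 : Type*} [RCLike 𝕜] {V : Type*}

theorem tsum_split_root (F : V → ℝ≥0∞) (root : V) :
    ∑' v : V, F v = F root + ∑' v : ↥{v : V | v ≠ root}, F v.1 := by
  rw [tsum_subtype]
  have h : ∀ x : V, F x = ({root} : Set V).indicator F x + {v : V | v ≠ root}.indicator F x := by
    intro x
    by_cases hx : x = root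
    · subst hx; simp [Set.indicator]
    · simp [Set.indicator, hx]
  rw [tsum_congr h, ENNReal.tsum_add]
  congr 1
  rw [tsum_eq_single root]
  · simp
  · intro c hc; simp [Set.indicator, hc]

theorem tsum_branch {par : V → Option V} (hT : IsDirectedTree par) {root : V}
    {b : ℕ → Option V} (hb : IsOptBranch par root b) {w : V → ℝ≥0∞} (hw : ∀ v, w v ≠ 0) :
    ∑' n : ℕ, (b n).elim 0 w = ∑' v : ↥{v : V | ∃ n : ℕ, b n = some v}, w v.1 := by
  apply tsum_eq_tsum_of_ne_zero_bij
    (i := fun p : Function.support (fun v : ↥{v : V | ∃ n : ℕ, b n = some v} => w v.1) =>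
      (p.1.2).choose)
  · rintro ⟨⟨v, hv⟩, hgv⟩ ⟨⟨v', hv'⟩, hgv'⟩ hij
    have h1 : b (hv.choose) = some v := hv.choose_spec
    have h2 : b (hv'.choose) = some v' := hv'.choose_spec
    simp only at hij
    rw [hij] at h1
    have : v = v' := Option.some_injective _ (h1.symm.trans h2)
    subst this
    rfl
  · rintro n hn
    simp only [Function.mem_support] at hn
    cases hbn : b n with
    | none => rw [hbn] at hn; simp at hn
    | some v =>
        have hv : v ∈ {v : V | ∃ n : ℕ, b n = some v} := ⟨n, hbn⟩
        have hgv : w v ≠ 0 := hw v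
        refine ⟨⟨⟨v, hv⟩, hgv⟩, ?_⟩
        have hspec : b (hv.choose) = some v := hv.choose_spec
        exact optBranch_inj hT hb hspec hbn
  · rintro ⟨⟨v, hv⟩, hgv⟩
    have hspec : b (hv.choose) = some v := hv.choose_spec
    simp only [hspec]
    rfl

theorem nnnorm_brInd_mul (b : ℕ → Option V) (w : V → ℝ≥0∞) (v : V) :
    (‖brInd 𝕜 b v‖₊ : ℝ≥0∞) * w v = Set.indicator {v : V | ∃ n : ℕ, b n = some v} w v := by
  by_cases hv : ∃ n : ℕ, b n = some v
  · simp [brInd, hv, Set.indicator]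
  · simp [brInd, hv, Set.indicator]

theorem lpSumOn_univ_eq (w : V → ℝ≥0∞) (g : V → 𝕜) :
    lpSumOn w 1 Set.univ g = ∑' v : V, (‖g v‖₊ : ℝ≥0∞) * w v := by
  rw [lpSumOn]
  norm_num [ENNReal.rpow_one]
  exact tsum_univ fun v => (‖g v‖₊ : ℝ≥0∞) * w v

theorem lpSumOn_ne_eq (w : V → ℝ≥0∞) (root : V) (g : V → 𝕜) :
    lpSumOn w 1 {v : V | v ≠ root} g
      = ∑' v : ↥{v : V | v ≠ root}, (‖g v.1‖₊ : ℝ≥0∞) * w v.1 := by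
  rw [lpSumOn]
  norm_num [ENNReal.rpow_one]

/-- The `ℓ¹`-sum of a branch indicator over all of `V`. -/
theorem lpSumOn_brInd_univ {par : V → Option V} (hT : IsDirectedTree par) {root : V}
    {b : ℕ → Option V} (hb : IsOptBranch par root b) {w : V → ℝ≥0∞} (hw : ∀ v, w v ≠ 0) :
    lpSumOn w 1 Set.univ (brInd 𝕜 b) = w root + branchTail w b := by
  rw [lpSumOn_univ_eq, tsum_congr (nnnorm_brInd_mul (𝕜 := 𝕜) b w), ← tsum_subtype,
    ← tsum_branch hT hb hw, tsum_eq_zero_add' ENNReal.summable, hb.1]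
  rfl

/-- The `ℓ¹`-sum of a branch indicator away from the root. -/
theorem lpSumOn_brInd_ne {par : V → Option V} (hT : IsDirectedTree par) {root : V}
    {b : ℕ → Option V} (hb : IsOptBranch par root b) {w : V → ℝ≥0∞} (hw : ∀ v, w v ≠ 0)
    (hwt : w root ≠ ⊤) :
    lpSumOn w 1 {v : V | v ≠ root} (brInd 𝕜 b) = branchTail w b := by
  have key : w root + branchTail w b
      = w root + lpSumOn w 1 {v : V | v ≠ root} (brInd 𝕜 b) := by
    rw [← lpSumOn_brInd_univ (𝕜 := 𝕜) hT hb hw, lpSumOn_univ_eq, lpSumOn_ne_eq,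
      tsum_split_root (fun v => (‖brInd 𝕜 b v‖₊ : ℝ≥0∞) * w v) root]
    congr 1
    rw [brInd_root hb]
    simp
  exact (WithTop.add_left_cancel hwt key).symm

end Tsums

section Phi

variable {𝕜 : Type*} [RCLike 𝕜] {V : Type*}

/-- Sum of `F` over the subtree rooted at `v`. -/
noncomputable def phiSum (par : V → Option V) (F : V → ℝ≥0∞) (v : V) : ℝ≥0∞ :=
  ∑' x : ↥(descendants par v), F x.1

theorem phiSum_split (par : V → Option V) (F : V → ℝ≥0∞) (v : V) :
    phiSum par F v = F v + ∑' x : ↥(descendants par v \ {v}), F x.1 := by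
  rw [phiSum, tsum_subtype, tsum_subtype]
  have h : ∀ x : V, (descendants par v).indicator F x
      = ({v} : Set V).indicator F x + (descendants par v \ {v}).indicator F x := by
    intro x
    by_cases hx : x = v
    · subst hx
      simp [Set.indicator, mem_descendants_self par x]
    · by_cases hd : x ∈ descendants par v
      · simp [Set.indicator, hd, hx]
      · simp [Set.indicator, hd, hx]
  rw [tsum_congr h, ENNReal.tsum_add]
  congr 1
  rw [tsum_eq_single v]
  · simp
  · intro c hc; simp [Set.indicator, hc]

theorem le_phiSum (par : V → Option V) (F : V → ℝ≥0∞) (v : V) : F v ≤ phiSum par F v := by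
  rw [phiSum_split]; exact le_self_add

theorem tsum_phiSum_children_le (par : V → Option V) (hT : IsDirectedTree par)
    (F : V → ℝ≥0∞) (v : V) :
    ∑' u : ↥(children par v), phiSum par F u.1
      ≤ ∑' x : ↥(descendants par v \ {v}), F x.1 := by
  have hsig : ∑' u : ↥(children par v), phiSum par F u.1
      = ∑' p : (Σ u : ↥(children par v), ↥(descendants par u.1)), F p.2.1 := by
    rw [ENNReal.tsum_sigma']
    rfl
  rw [hsig]
  exact Summable.tsum_le_tsum_of_inj
    (fun p : (Σ u : ↥(children par v), ↥(descendants par u.1)) =>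
      (⟨p.2.1, descendants_child_subset par hT p.1.2 p.2.2⟩ : ↥(descendants par v \ {v})))
    (by
      rintro ⟨⟨u, hu⟩, ⟨x, hx⟩⟩ ⟨⟨u', hu'⟩, ⟨x', hx'⟩⟩ hpq
      simp only [Subtype.mk.injEq] at hpq
      have hxx : x = x' := hpq
      subst hxx
      have huu : u = u' := by
        by_contra hne
        exact descendants_disjoint par hT hu hu' hne hx hx'
      subst huu
      rfl)
    (fun _ _ => zero_le) (fun _ => le_rfl) ENNReal.summable ENNReal.summable

theorem phiSum_step (par : V → Option V) (hT : IsDirectedTree par) (F : V → ℝ≥0∞) (v : V) :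
    F v + ∑' u : ↥(children par v), phiSum par F u.1 ≤ phiSum par F v := by
  rw [phiSum_split]
  exact add_le_add_right (tsum_phiSum_children_le par hT F v) _

theorem nnnorm_hasSum_le {ι : Type*} {f : ι → 𝕜} {a : 𝕜} (h : HasSum f a) :
    (‖a‖₊ : ℝ≥0∞) ≤ ∑' i, (‖f i‖₊ : ℝ≥0∞) := by
  have h2 : Filter.Tendsto (fun s : Finset ι => ((‖∑ i ∈ s, f i‖₊ : ℝ≥0) : ℝ≥0∞))
      Filter.atTop (𝓝 ((‖a‖₊ : ℝ≥0) : ℝ≥0∞)) :=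
    ENNReal.tendsto_coe.2 ((continuous_nnnorm.tendsto a).comp h)
  refine le_of_tendsto h2 (Filter.Eventually.of_forall fun s => ?_)
  calc ((‖∑ i ∈ s, f i‖₊ : ℝ≥0) : ℝ≥0∞) ≤ ((∑ i ∈ s, ‖f i‖₊ : ℝ≥0) : ℝ≥0∞) := by
        exact_mod_cast nnnorm_sum_le s f
    _ = ∑ i ∈ s, ((‖f i‖₊ : ℝ≥0) : ℝ≥0∞) := by push_cast; rfl
    _ ≤ ∑' i, ((‖f i‖₊ : ℝ≥0) : ℝ≥0∞) := ENNReal.sum_le_tsum s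

end Phi

section Greedy

variable {V : Type*}

theorem geom_sum_half_le (k : ℕ) :
    ∑ n ∈ Finset.range k, ((2 : ℝ≥0∞)⁻¹) ^ (n + 1) ≤ 1 := by
  have key : ∀ k : ℕ, ∑ n ∈ Finset.range k, ((2 : ℝ≥0∞)⁻¹) ^ (n + 1) + (2 : ℝ≥0∞)⁻¹ ^ k = 1 := by
    intro k
    induction k with
    | zero => simp
    | succ k ih =>
        rw [Finset.sum_range_succ, add_assoc]
        have h2 : (2 : ℝ≥0∞)⁻¹ ^ (k + 1) + (2 : ℝ≥0∞)⁻¹ ^ (k + 1) = (2 : ℝ≥0∞)⁻¹ ^ k := by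
          rw [← two_mul, pow_succ]
          have harr : (2 : ℝ≥0∞) * ((2 : ℝ≥0∞)⁻¹ ^ k * (2 : ℝ≥0∞)⁻¹)
              = ((2 : ℝ≥0∞) * (2 : ℝ≥0∞)⁻¹) * (2 : ℝ≥0∞)⁻¹ ^ k := by ring
          rw [harr, ENNReal.mul_inv_cancel (by norm_num) (by norm_num), one_mul]
        rw [h2, ih]
  calc ∑ n ∈ Finset.range k, ((2 : ℝ≥0∞)⁻¹) ^ (n + 1)
      ≤ ∑ n ∈ Finset.range k, ((2 : ℝ≥0∞)⁻¹) ^ (n + 1) + (2 : ℝ≥0∞)⁻¹ ^ k := le_add_right le_rfl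
    _ = 1 := key k

theorem exists_good_child (par : V → Option V) (hT : IsDirectedTree par)
    (w h : V → ℝ≥0∞)
    (hsf : ∀ v : V, children par v ≠ ∅ → h v ≤ ∑' u : ↥(children par v), h u.1)
    (v : V) (t : ℝ≥0∞) (hne : children par v ≠ ∅)
    (hlt : phiSum par (fun x => h x * w x) v < h v * (w v + t)) :
    ∃ u, u ∈ children par v ∧ h u ≠ 0 ∧ phiSum par (fun x => h x * w x) u < t * h u := by
  by_contra hcon
  push_neg at hcon
  set F := fun x => h x * w x with hF
  have hall : ∀ u : ↥(children par v), t * h u.1 ≤ phiSum par F u.1 := by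
    rintro ⟨u, hu⟩
    by_cases h0 : h u = 0
    · rw [h0, mul_zero]; exact zero_le
    · exact hcon u hu h0
  have key : h v * (w v + t) ≤ phiSum par F v := by
    calc h v * (w v + t) = F v + h v * t := by rw [mul_add]
      _ = F v + t * h v := by rw [mul_comm (h v) t]
      _ ≤ F v + t * ∑' u : ↥(children par v), h u.1 :=
          add_le_add_right (mul_le_mul_right (hsf v hne) t) _
      _ = F v + ∑' u : ↥(children par v), t * h u.1 := by rw [ENNReal.tsum_mul_left]
      _ ≤ F v + ∑' u : ↥(children par v), phiSum par F u.1 :=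
          add_le_add_right (ENNReal.tsum_le_tsum hall) _
      _ ≤ phiSum par F v := phiSum_step par hT F v
  exact absurd hlt (not_lt.2 key)

theorem greedy_branch (par : V → Option V) (hT : IsDirectedTree par)
    (root : V) (w h : V → ℝ≥0∞) (hfin : ∀ v, h v ≠ ⊤)
    (hsf : ∀ v : V, children par v ≠ ∅ → h v ≤ ∑' u : ↥(children par v), h u.1)
    (hroot1 : h root = 1)
    (hΦ : phiSum par (fun x => h x * w x) root ≠ ⊤)
    (ε : ℝ≥0∞) (hε0 : ε ≠ 0) (hεt : ε ≠ ⊤) :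
    ∃ b : ℕ → Option V, IsOptBranch par root b ∧
      (∑' n : ℕ, (b n).elim 0 w) ≤ phiSum par (fun x => h x * w x) root + ε := by
  classical
  set F := fun x => h x * w x with hF
  set Φ := phiSum par F with hΦdef
  set C : V → ℝ≥0∞ := fun x => Φ x / h x with hC
  set εs : ℕ → ℝ≥0∞ := fun k => ε * (2 : ℝ≥0∞)⁻¹ ^ (k + 1) with hεs
  have hεs0 : ∀ k, εs k ≠ 0 := fun k =>
    mul_ne_zero hε0 (pow_ne_zero _ (ENNReal.inv_ne_zero.2 (by norm_num)))
  have hεst : ∀ k, εs k ≠ ⊤ := fun k =>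
    ENNReal.mul_ne_top hεt (ENNReal.pow_ne_top (ENNReal.inv_ne_top.2 (by norm_num)))
  have hCfin : ∀ v : V, h v ≠ 0 → Φ v ≠ ⊤ → C v ≠ ⊤ := fun v h0 hΦv =>
    (ENNReal.div_lt_top hΦv h0).ne
  have hwleC : ∀ v : V, h v ≠ 0 → w v ≤ C v := by
    intro v h0
    show w v ≤ Φ v / h v
    rw [ENNReal.le_div_iff_mul_le (Or.inl h0) (Or.inl (hfin v)), mul_comm]
    exact le_phiSum par F v
  have hΦC : ∀ v : V, h v ≠ 0 → C v * h v = Φ v := fun v h0 =>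
    ENNReal.div_mul_cancel h0 (hfin v)
  have hstep : ∀ (k : ℕ) (v : V), h v ≠ 0 → Φ v ≠ ⊤ → children par v ≠ ∅ →
      ∃ u, u ∈ children par v ∧ h u ≠ 0 ∧ Φ u < ((C v - w v) + εs k) * h u := by
    intro k v h0 hΦv hne
    apply exists_good_child par hT w h hsf v _ hne
    have heq : w v + ((C v - w v) + εs k) = C v + εs k := by
      rw [← add_assoc, add_comm (w v) (C v - w v), tsub_add_cancel_of_le (hwleC v h0)]
    rw [heq]
    calc Φ v = C v * h v := (hΦC v h0).symm
      _ < (C v + εs k) * h v := by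
          rw [ENNReal.mul_lt_mul_iff_left h0 (hfin v)]
          exact ENNReal.lt_add_right (hCfin v h0 hΦv) (hεs0 k)
      _ = h v * (C v + εs k) := mul_comm _ _
  -- the step function
  obtain ⟨sf, hsf_spec⟩ : ∃ sf : ℕ → V → Option V, ∀ k v, sf k v =
      if H : ∃ u, u ∈ children par v ∧ h u ≠ 0 ∧ Φ u < ((C v - w v) + εs k) * h u
      then some H.choose else none := ⟨_, fun k v => rfl⟩
  obtain ⟨b, hb0, hbsucc⟩ : ∃ b : ℕ → Option V, b 0 = some root ∧
      ∀ k, b (k + 1) = (b k).bind (sf k) :=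
    ⟨fun n => Nat.rec (motive := fun _ => Option V) (some root)
      (fun k prev => prev.bind (sf k)) n, rfl, fun k => rfl⟩
  have main : ∀ k : ℕ,
      (∀ v, b k = some v → h v ≠ 0 ∧ Φ v ≠ ⊤) ∧
      (∑ n ∈ Finset.range k, (b n).elim 0 w) + (b k).elim 0 C
        ≤ C root + ∑ n ∈ Finset.range k, εs n := by
    intro k
    induction k with
    | zero =>
        refine ⟨?_, ?_⟩
        · intro v hv
          have hvr : v = root := Option.some_injective _ (hv.symm.trans hb0)
          subst hvr
          exact ⟨by rw [hroot1]; exact one_ne_zero, hΦ⟩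
        · rw [hb0]; simp
    | succ k ih =>
        obtain ⟨ihInv, ihSum⟩ := ih
        cases hbk : b k with
        | none =>
            have hnone : b (k + 1) = none := by rw [hbsucc, hbk]; rfl
            refine ⟨?_, ?_⟩
            · intro v hv; rw [hnone] at hv; exact absurd hv (by simp)
            · rw [Finset.sum_range_succ, Finset.sum_range_succ (f := εs), hnone, hbk]
              rw [hbk] at ihSum
              have e1 : (Option.none (α := V)).elim (0 : ℝ≥0∞) w = 0 := rfl
              have e2 : (Option.none (α := V)).elim (0 : ℝ≥0∞) C = 0 := rfl
              rw [e2, add_zero] at ihSum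
              rw [e1, e2, add_zero, add_zero]
              exact le_trans ihSum (by rw [← add_assoc]; exact le_add_right le_rfl)
        | some v =>
            obtain ⟨hv0, hvΦ⟩ := ihInv v hbk
            have hsum_v : (∑ n ∈ Finset.range k, (b n).elim 0 w) + C v
                ≤ C root + ∑ n ∈ Finset.range k, εs n := by
              rw [hbk] at ihSum
              simpa using ihSum
            by_cases H : ∃ u, u ∈ children par v ∧ h u ≠ 0 ∧ Φ u < ((C v - w v) + εs k) * h u
            · have hbk1 : b (k + 1) = some H.choose := by
                rw [hbsucc, hbk]
                show sf k v = _
                rw [hsf_spec, dif_pos H]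
              obtain ⟨hu_mem, hu0, huΦ⟩ := H.choose_spec
              have htfin : (C v - w v) + εs k ≠ ⊤ :=
                ENNReal.add_ne_top.2 ⟨(tsub_le_self.trans_lt
                  (lt_top_iff_ne_top.2 (hCfin v hv0 hvΦ))).ne, hεst k⟩
              have hmulfin : ((C v - w v) + εs k) * h H.choose ≠ ⊤ :=
                ENNReal.mul_ne_top htfin (hfin _)
              have huΦfin : Φ H.choose ≠ ⊤ := (huΦ.trans (lt_top_iff_ne_top.2 hmulfin)).ne
              refine ⟨?_, ?_⟩
              · intro v' hv'
                have : v' = H.choose := Option.some_injective _ (hv'.symm.trans hbk1)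
                subst this
                exact ⟨hu0, huΦfin⟩
              · have hCu : C H.choose ≤ (C v - w v) + εs k := by
                  show Φ H.choose / h H.choose ≤ _
                  exact le_of_lt ((ENNReal.div_lt_iff (Or.inl hu0) (Or.inl (hfin _))).2 huΦ)
                rw [Finset.sum_range_succ, Finset.sum_range_succ (f := εs), hbk1, hbk]
                simp only [Option.elim]
                calc (∑ n ∈ Finset.range k, (b n).elim 0 w) + w v + C H.choose
                    ≤ (∑ n ∈ Finset.range k, (b n).elim 0 w) + w v + ((C v - w v) + εs k) :=
                      add_le_add_right hCu _
                  _ = (∑ n ∈ Finset.range k, (b n).elim 0 w) + (C v + εs k) := by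
                      rw [add_assoc, ← add_assoc (w v), add_comm (w v) (C v - w v),
                        tsub_add_cancel_of_le (hwleC v hv0)]
                  _ = ((∑ n ∈ Finset.range k, (b n).elim 0 w) + C v) + εs k := by
                      rw [add_assoc]
                  _ ≤ (C root + ∑ n ∈ Finset.range k, εs n) + εs k := add_le_add_left hsum_v _
                  _ = C root + (∑ n ∈ Finset.range k, εs n + εs k) := by rw [add_assoc]
            · have hbk1 : b (k + 1) = none := by
                rw [hbsucc, hbk]
                show sf k v = _
                rw [hsf_spec, dif_neg H]
              refine ⟨?_, ?_⟩
              · intro v' hv'; rw [hbk1] at hv'; exact absurd hv' (by simp)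
              · rw [Finset.sum_range_succ, Finset.sum_range_succ (f := εs), hbk1, hbk]
                simp only [Option.elim]
                rw [add_zero]
                calc (∑ n ∈ Finset.range k, (b n).elim 0 w) + w v
                    ≤ (∑ n ∈ Finset.range k, (b n).elim 0 w) + C v :=
                      add_le_add_right (hwleC v hv0) _
                  _ ≤ C root + ∑ n ∈ Finset.range k, εs n := hsum_v
                  _ ≤ C root + (∑ n ∈ Finset.range k, εs n + εs k) := by
                      rw [← add_assoc]; exact le_add_right le_rfl
  have hbranch : IsOptBranch par root b := by
    refine ⟨hb0, ?_, ?_⟩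
    · intro k v hbk
      obtain ⟨hv0, hvΦ⟩ := (main k).1 v hbk
      by_cases H : ∃ u, u ∈ children par v ∧ h u ≠ 0 ∧ Φ u < ((C v - w v) + εs k) * h u
      · right
        refine ⟨H.choose, H.choose_spec.1, ?_⟩
        rw [hbsucc, hbk]
        show sf k v = _
        rw [hsf_spec, dif_pos H]
      · left
        refine ⟨?_, ?_⟩
        · by_contra hne
          exact H (hstep k v hv0 hvΦ hne)
        · rw [hbsucc, hbk]
          show sf k v = _
          rw [hsf_spec, dif_neg H]
    · intro k hk
      rw [hbsucc, hk]
      rfl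
  refine ⟨b, hbranch, ?_⟩
  have hCroot : C root = Φ root := by
    show Φ root / h root = Φ root
    rw [hroot1, div_one]
  have hsum : ∀ k, (∑ n ∈ Finset.range k, (b n).elim 0 w) ≤ Φ root + ε := by
    intro k
    have h2 : (∑ n ∈ Finset.range k, (b n).elim 0 w)
        ≤ C root + ∑ n ∈ Finset.range k, εs n := le_trans (le_add_right le_rfl) (main k).2
    refine h2.trans ?_
    rw [hCroot]
    apply add_le_add_right
    calc ∑ n ∈ Finset.range k, εs n = ε * ∑ n ∈ Finset.range k, (2 : ℝ≥0∞)⁻¹ ^ (n + 1) := by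
          rw [Finset.mul_sum]
      _ ≤ ε * 1 := mul_le_mul_right (geom_sum_half_le k) ε
      _ = ε := mul_one ε
  rw [ENNReal.tsum_eq_iSup_sum' Finset.range (fun t => Finset.exists_nat_subset_range t)]
  exact iSup_le hsum

end Greedy


/-- Theorem 6.8 / `t-char1inv`: the case `p = 1` on an arbitrary rooted
tree: the infima over backward invariant sequences equal `r_1` resp. `c_1`, and when these
are finite, indicator sequences of branches of summable weight are backward invariant
sequences in `ℓ^1(V,μ)` with value `1` at the root. -/
theorem statement8
    {𝕜 : Type*} [RCLike 𝕜] {V : Type*} (par : V → Option V) (hTree : IsDirectedTree par)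
    (root : V) (hroot : IsRoot par root) (μ : V → 𝕜) (hμ : ∀ v : V, μ v ≠ 0) :
    -- (a)
    ((⨅ g ∈ {g : V → 𝕜 | BackwardInv (children par) g ∧ g root = 1},
        lpSumOn (nw μ) 1 Set.univ g) = r1C par (nw μ) root ∧
      (⨅ g ∈ {g : V → 𝕜 | BackwardInv (children par) g ∧ g root = 1},
        lpSumOn (nw μ) 1 {v : V | v ≠ root} g) = c1C par (nw μ) root) ∧
    -- (b)
    (r1C par (nw μ) root < ⊤ →
      (∃ b : ℕ → Option V, IsOptBranch par root b ∧ nw μ root + branchTail (nw μ) b < ⊤) ∧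
      ∀ b : ℕ → Option V, IsOptBranch par root b → nw μ root + branchTail (nw μ) b < ⊤ →
        BackwardInv (children par) (fun v : V => if ∃ n : ℕ, b n = some v then (1 : 𝕜) else 0) ∧
        (fun v : V => if ∃ n : ℕ, b n = some v then (1 : 𝕜) else 0) root = 1 ∧
        lpSumOn (nw μ) 1 Set.univ
          (fun v : V => if ∃ n : ℕ, b n = some v then (1 : 𝕜) else 0) < ⊤) := by
  classical
  set w : V → ℝ≥0∞ := nw μ with hwdef
  have hw0 : ∀ v, w v ≠ 0 := by
    intro v
    simp only [hwdef, nw, ne_eq, ENNReal.coe_eq_zero, nnnorm_eq_zero]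
    exact hμ v
  have hwt : ∀ v, w v ≠ ⊤ := fun v => ENNReal.coe_ne_top
  -- identity: for any g with g root = 1, the ℓ¹ sum over V splits at the root
  have hUsplit : ∀ g : V → 𝕜, g root = 1 →
      lpSumOn w 1 Set.univ g = w root + lpSumOn w 1 {v : V | v ≠ root} g := by
    intro g hg1
    rw [lpSumOn_univ_eq, lpSumOn_ne_eq,
      tsum_split_root (fun v => (‖g v‖₊ : ℝ≥0∞) * w v) root, hg1]
    simp
  -- lower bound: c1C ≤ the off-root sum of any backward invariant g with g root = 1
  have keyA : ∀ g : V → 𝕜, BackwardInv (children par) g → g root = 1 →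
      c1C par w root ≤ lpSumOn w 1 {v : V | v ≠ root} g := by
    intro g hginv hg1
    by_cases hTtop : lpSumOn w 1 {v : V | v ≠ root} g = ⊤
    · rw [hTtop]; exact le_top
    set h : V → ℝ≥0∞ := fun v => (‖g v‖₊ : ℝ≥0∞) with hhdef
    have hfin : ∀ v, h v ≠ ⊤ := fun v => ENNReal.coe_ne_top
    have hroot1 : h root = 1 := by rw [hhdef]; simp [hg1]
    have hsf : ∀ v : V, children par v ≠ ∅ → h v ≤ ∑' u : ↥(children par v), h u.1 :=
      fun v hne => nnnorm_hasSum_le (hginv v hne)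
    have hphi_eq : phiSum par (fun x => h x * w x) root
        = w root + lpSumOn w 1 {v : V | v ≠ root} g := by
      calc phiSum par (fun x => h x * w x) root
          = ∑' x : ↥(Set.univ : Set V), h x.1 * w x.1 := by
            rw [phiSum, descendants_root_eq_univ par hTree hroot]
        _ = ∑' v : V, h v * w v := tsum_univ fun v => h v * w v
        _ = h root * w root + ∑' v : ↥{v : V | v ≠ root}, h v.1 * w v.1 :=
            tsum_split_root (fun v => h v * w v) root
        _ = w root + lpSumOn w 1 {v : V | v ≠ root} g := by
            rw [lpSumOn_ne_eq, hroot1, one_mul]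
    have hphi_ne : phiSum par (fun x => h x * w x) root ≠ ⊤ := by
      rw [hphi_eq]
      exact ENNReal.add_ne_top.2 ⟨hwt root, hTtop⟩
    have hr1 : r1C par w root ≤ phiSum par (fun x => h x * w x) root := by
      apply ENNReal.le_of_forall_pos_le_add
      intro ε hε _
      obtain ⟨b, hb, hble⟩ := greedy_branch par hTree root w h hfin hsf hroot1 hphi_ne
        (ε : ℝ≥0∞) (by exact_mod_cast hε.ne') ENNReal.coe_ne_top
      have h1 : r1C par w root ≤ w root + branchTail w b := by
        rw [r1C]
        exact add_le_add_right (iInf₂_le b hb) _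
      have h2 : w root + branchTail w b = ∑' n : ℕ, (b n).elim 0 w := by
        rw [tsum_eq_zero_add' ENNReal.summable, hb.1]
        rfl
      exact h1.trans (h2.le.trans hble)
    rw [r1C, hphi_eq] at hr1
    exact (ENNReal.add_le_add_iff_left (hwt root)).1 hr1
  -- upper bound pieces via branch indicators
  have hmemJ : ∀ b : ℕ → Option V, IsOptBranch par root b →
      brInd 𝕜 b ∈ {g : V → 𝕜 | BackwardInv (children par) g ∧ g root = 1} :=
    fun b hb => ⟨brInd_backwardInv hTree hroot hb, brInd_root hb⟩
  have eq2 : (⨅ g ∈ {g : V → 𝕜 | BackwardInv (children par) g ∧ g root = 1},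
      lpSumOn w 1 {v : V | v ≠ root} g) = c1C par w root := by
    apply le_antisymm
    · rw [c1C]
      apply le_iInf₂
      intro b hb
      exact iInf₂_le_of_le (brInd 𝕜 b) (hmemJ b hb)
        (le_of_eq (lpSumOn_brInd_ne hTree hb hw0 (hwt root)))
    · exact le_iInf₂ fun g hg => keyA g hg.1 hg.2
  have eq1 : (⨅ g ∈ {g : V → 𝕜 | BackwardInv (children par) g ∧ g root = 1},
      lpSumOn w 1 Set.univ g) = r1C par w root := by
    apply le_antisymm
    · rw [r1C, c1C, ENNReal.add_iInf]
      apply le_iInf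
      intro b
      rw [ENNReal.add_iInf]
      apply le_iInf
      intro hb
      exact iInf₂_le_of_le (brInd 𝕜 b) (hmemJ b hb)
        (le_of_eq (lpSumOn_brInd_univ hTree hb hw0))
    · apply le_iInf₂
      intro g hg
      rw [hUsplit g hg.2, r1C]
      exact add_le_add_right (keyA g hg.1 hg.2) _
  refine ⟨⟨eq1, eq2⟩, ?_⟩
  intro hr1top
  have hc1top : c1C par w root < ⊤ := by
    rw [r1C] at hr1top
    exact (ENNReal.add_lt_top.1 hr1top).2
  constructor
  · -- existence of a branch with finite weight
    rw [c1C] at hc1top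
    obtain ⟨b, hb⟩ := iInf_lt_iff.1 hc1top
    by_cases hmem : IsOptBranch par root b
    · refine ⟨b, hmem, ?_⟩
      have heq : (⨅ (_ : b ∈ {b : ℕ → Option V | IsOptBranch par root b}), branchTail w b)
          = branchTail w b := iInf_pos hmem
      rw [heq] at hb
      refine ENNReal.add_lt_top.2 ⟨?_, hb⟩
      exact lt_top_iff_ne_top.2 (hwt root)
    · have heq : (⨅ (_ : b ∈ {b : ℕ → Option V | IsOptBranch par root b}), branchTail w b)
          = ⊤ := iInf_neg hmem
      rw [heq] at hb
      exact absurd hb (lt_irrefl ⊤)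
  · intro b hb hfin
    refine ⟨brInd_backwardInv hTree hroot hb, brInd_root hb, ?_⟩
    show lpSumOn w 1 Set.univ (brInd 𝕜 b) < ⊤
    rw [lpSumOn_brInd_univ hTree hb hw0]
    exact hfin

end PaperTree
end
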